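/- arXiv:2605.15373 — 5 statements merged into one kernel-verified Lean document; each statement's English description precedes it below -/
import Mathlib

section
/- Let p and p_ε (ε > 0) be probability densities with respect to a σ-finite measure ν, and suppose the path is differentiable in quadratic mean at ε = 0 with score ℓ̇ ∈ L²(p·ν): ‖(√p_ε - √p)/ε - (1/2)ℓ̇√p‖_{L²(ν)} → 0 as ε → 0. Then ‖(p_ε - p)/ε - p·ℓ̇‖_{L¹(ν)} → 0 as ε → 0. -/
open MeasureTheory Filter

theorem stmt3 {𝒪 : Type*} [MeasurableSpace 𝒪] (ν : Measure 𝒪) [SigmaFinite ν]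
    (p : 𝒪 → ℝ) (pe : ℝ → 𝒪 → ℝ) (ℓ : 𝒪 → ℝ)
    (hp : Measurable p) (hpe : ∀ ε, Measurable (pe ε)) (hℓ : Measurable ℓ)
    (hp0 : ∀ x, 0 ≤ p x) (hpe0 : ∀ ε x, 0 ≤ pe ε x)
    (hpint : ∫ x, p x ∂ν = 1) (hpeint : ∀ ε, ∫ x, pe ε x ∂ν = 1)
    (hℓL2 : Integrable (fun x => p x * ℓ x ^ 2) ν)
    (hqmd : Tendsto (fun ε => ∫ x, ((Real.sqrt (pe ε x) - Real.sqrt (p x)) / ε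
        - (1/2) * ℓ x * Real.sqrt (p x)) ^ 2 ∂ν) (nhdsWithin 0 (Set.Ioi 0)) (nhds 0)) :
    Tendsto (fun ε => ∫ x, |(pe ε x - p x) / ε - p x * ℓ x| ∂ν)
      (nhdsWithin 0 (Set.Ioi 0)) (nhds 0) := by
  -- notation
  set s : 𝒪 → ℝ := fun x => Real.sqrt (p x) with hs_def
  set h : 𝒪 → ℝ := fun x => (1/2) * ℓ x * s x with hh_def
  set g : ℝ → 𝒪 → ℝ := fun ε x => (Real.sqrt (pe ε x) - s x) / ε - h x with hg_def
  set A : ℝ → ℝ := fun ε => ∫ x, g ε x ^ 2 ∂ν with hA_def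
  have hsmeas : Measurable s := hp.sqrt
  have hs_sq : ∀ x, s x ^ 2 = p x := fun x => Real.sq_sqrt (hp0 x)
  have hpInt : Integrable p ν := by
    by_contra hc
    rw [integral_undef hc] at hpint; norm_num at hpint
  have hpeInt : ∀ ε, Integrable (pe ε) ν := by
    intro ε; by_contra hc
    have h1 := hpeint ε
    rw [integral_undef hc] at h1; norm_num at h1
  have hs2int : Integrable (fun x => s x ^ 2) ν := by
    simpa only [hs_sq] using hpInt
  have hs2eq : ∫ x, s x ^ 2 ∂ν = 1 := by
    simp only [hs_sq]; exact hpint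
  have hhmeas : Measurable h := (measurable_const.mul hℓ).mul hsmeas
  have hh2int : Integrable (fun x => h x ^ 2) ν := by
    have heq : (fun x => h x ^ 2) = fun x => (1/4) * (p x * ℓ x ^ 2) := by
      funext x
      simp only [hh_def, mul_pow, hs_sq]
      ring
    rw [heq]
    exact hℓL2.const_mul _
  have hhL2 : MemLp h 2 ν := (memLp_two_iff_integrable_sq hhmeas.aestronglyMeasurable).mpr hh2int
  set C : ℝ := ∫ x, h x ^ 2 ∂ν with hC_def
  have hC0 : 0 ≤ C := integral_nonneg fun x => sq_nonneg _
  have hA0 : ∀ ε, 0 ≤ A ε := fun ε => integral_nonneg fun x => sq_nonneg _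
  have hgmeas : ∀ ε, Measurable (g ε) := fun ε =>
    (((hpe ε).sqrt.sub hsmeas).div_const ε).sub hhmeas
  have hs0 : ∀ x, 0 ≤ s x := fun x => Real.sqrt_nonneg _
  clear_value s h g
  -- g ε ∈ L²
  have hgL2 : ∀ ε, 0 < ε → MemLp (g ε) 2 ν := by
    intro ε hε
    have hbint : Integrable (fun x => 2 * (pe ε x + p x)) ν := by
      simpa only [Pi.add_apply] using ((hpeInt ε).add hpInt).const_mul 2
    have hd2 : Integrable (fun x => (Real.sqrt (pe ε x) - s x) ^ 2) ν := by
      refine Integrable.mono hbint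
        (((hpe ε).sqrt.sub hsmeas).pow_const 2).aestronglyMeasurable
        (ae_of_all _ fun x => ?_)
      have h1 : 0 ≤ pe ε x := hpe0 ε x
      have h2 : 0 ≤ p x := hp0 x
      rw [Real.norm_of_nonneg (sq_nonneg _), Real.norm_of_nonneg (by positivity)]
      nlinarith [Real.sq_sqrt h1, hs_sq x, sq_nonneg (Real.sqrt (pe ε x) + s x)]
    have hdL2 : MemLp (fun x => Real.sqrt (pe ε x) - s x) 2 ν :=
      (memLp_two_iff_integrable_sq ((hpe ε).sqrt.sub hsmeas).aestronglyMeasurable).mpr hd2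
    have h2 : MemLp (fun x => (Real.sqrt (pe ε x) - s x) / ε) 2 ν := by
      simpa [div_eq_mul_inv, mul_comm] using hdL2.const_mul ε⁻¹
    rw [hg_def]
    exact h2.sub hhL2
  have hg2int : ∀ ε, 0 < ε → Integrable (fun x => g ε x ^ 2) ν :=
    fun ε hε => (hgL2 ε hε).integrable_sq
  -- key bound
  have key : ∀ ε, 0 < ε → ∫ x, |(pe ε x - p x) / ε - p x * ℓ x| ∂ν
      ≤ 2 * Real.sqrt (A ε) + 2 * ε * A ε + 2 * ε * C := by
    intro ε hε
    have hεne : ε ≠ 0 := hε.ne'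
    have hident : ∀ x, (pe ε x - p x) / ε - p x * ℓ x
        = 2 * (s x * g ε x) + ε * (g ε x + h x) ^ 2 := by
      intro x
      have h1 : Real.sqrt (pe ε x) ^ 2 = pe ε x := Real.sq_sqrt (hpe0 ε x)
      have h2 : s x ^ 2 = p x := hs_sq x
      rw [← h1, ← h2]
      simp only [hg_def, hh_def]
      field_simp
      ring
    -- pointwise bound
    have hbd : ∀ x, |(pe ε x - p x) / ε - p x * ℓ x|
        ≤ 2 * (s x * |g ε x|) + 2 * ε * g ε x ^ 2 + 2 * ε * h x ^ 2 := by
      intro x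
      rw [hident x]
      have h0 : 0 ≤ s x := hs0 x
      have habs : |2 * (s x * g ε x)| = 2 * (s x * |g ε x|) := by
        rw [abs_mul, abs_mul, abs_of_nonneg h0]; norm_num
      have h1 : |2 * (s x * g ε x) + ε * (g ε x + h x) ^ 2|
          ≤ 2 * (s x * |g ε x|) + ε * (g ε x + h x) ^ 2 := by
        refine (abs_add_le _ _).trans ?_
        rw [habs, abs_of_nonneg (mul_nonneg hε.le (sq_nonneg _))]
      refine h1.trans ?_
      nlinarith [sq_nonneg (g ε x - h x), hε.le, sq_nonneg (g ε x + h x)]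
    -- integrability
    have hsg_int : Integrable (fun x => s x * |g ε x|) ν := by
      have hbint : Integrable (fun x => (1/2) * (s x ^ 2 + g ε x ^ 2)) ν := by
        simpa only [Pi.add_apply] using (hs2int.add (hg2int ε hε)).const_mul (1/2)
      refine Integrable.mono hbint
        (hsmeas.mul (hgmeas ε).abs).aestronglyMeasurable (ae_of_all _ fun x => ?_)
      have h0 : 0 ≤ s x := hs0 x
      rw [Real.norm_of_nonneg (mul_nonneg h0 (abs_nonneg _)),
        Real.norm_of_nonneg (by positivity)]
      have hsq : (0:ℝ) ≤ s x ^ 2 - 2 * (s x * |g ε x|) + g ε x ^ 2 := by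
        calc (0:ℝ) ≤ (s x - |g ε x|) ^ 2 := sq_nonneg _
          _ = s x ^ 2 - 2 * (s x * |g ε x|) + g ε x ^ 2 := by rw [sub_sq, sq_abs]; ring
      linarith
    have i1 : Integrable (fun x => 2 * (s x * |g ε x|)) ν := hsg_int.const_mul 2
    have i2 : Integrable (fun x => 2 * ε * g ε x ^ 2) ν := (hg2int ε hε).const_mul (2*ε)
    have i3 : Integrable (fun x => 2 * ε * h x ^ 2) ν := hh2int.const_mul (2*ε)
    have i12 : Integrable (fun x => 2 * (s x * |g ε x|) + 2 * ε * g ε x ^ 2) ν := i1.add i2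
    have hGint : Integrable
        (fun x => 2 * (s x * |g ε x|) + 2 * ε * g ε x ^ 2 + 2 * ε * h x ^ 2) ν := i12.add i3
    have hFint : Integrable (fun x => |(pe ε x - p x) / ε - p x * ℓ x|) ν := by
      refine Integrable.mono hGint
        ((((hpe ε).sub hp).div_const ε).sub (hp.mul hℓ)).abs.aestronglyMeasurable
        (ae_of_all _ fun x => ?_)
      have hb := hbd x
      have hg0 : 0 ≤ 2 * (s x * |g ε x|) + 2 * ε * g ε x ^ 2 + 2 * ε * h x ^ 2 :=
        le_trans (abs_nonneg _) hb
      rw [Real.norm_of_nonneg (abs_nonneg _), Real.norm_of_nonneg hg0]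
      exact hb
    have step1 : ∫ x, |(pe ε x - p x) / ε - p x * ℓ x| ∂ν
        ≤ ∫ x, (2 * (s x * |g ε x|) + 2 * ε * g ε x ^ 2 + 2 * ε * h x ^ 2) ∂ν :=
      integral_mono hFint hGint hbd
    have e1 : ∫ x, (2 * (s x * |g ε x|) + 2 * ε * g ε x ^ 2 + 2 * ε * h x ^ 2) ∂ν
        = (∫ x, (2 * (s x * |g ε x|) + 2 * ε * g ε x ^ 2) ∂ν) + ∫ x, 2 * ε * h x ^ 2 ∂ν :=
      integral_add i12 i3
    have e2 : ∫ x, (2 * (s x * |g ε x|) + 2 * ε * g ε x ^ 2) ∂ν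
        = (∫ x, 2 * (s x * |g ε x|) ∂ν) + ∫ x, 2 * ε * g ε x ^ 2 ∂ν :=
      integral_add i1 i2
    have e3 : ∫ x, 2 * (s x * |g ε x|) ∂ν = 2 * ∫ x, s x * |g ε x| ∂ν := integral_const_mul 2 _
    have e4 : ∫ x, 2 * ε * g ε x ^ 2 ∂ν = 2 * ε * A ε := integral_const_mul (2*ε) _
    have e5 : ∫ x, 2 * ε * h x ^ 2 ∂ν = 2 * ε * C := integral_const_mul (2*ε) _
    -- Cauchy-Schwarz
    have hconj : Real.HolderConjugate 2 2 := Real.HolderConjugate.two_two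
    have hsL2 : MemLp s (ENNReal.ofReal 2) ν := by
      rw [show ENNReal.ofReal 2 = 2 by norm_num]
      exact (memLp_two_iff_integrable_sq hsmeas.aestronglyMeasurable).mpr hs2int
    have hgaL2 : MemLp (fun x => |g ε x|) (ENNReal.ofReal 2) ν := by
      rw [show ENNReal.ofReal 2 = 2 by norm_num]
      exact (hgL2 ε hε).abs
    have cs := integral_mul_le_Lp_mul_Lq_of_nonneg hconj
      (ae_of_all _ fun x => hs0 x) (ae_of_all _ fun x => abs_nonneg (g ε x))
      hsL2 hgaL2
    have hrw1 : ∫ x, s x ^ (2:ℝ) ∂ν = 1 := by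
      rw [show (fun x => s x ^ (2:ℝ)) = fun x => s x ^ 2 by
        funext x; rw [show (2:ℝ) = ((2:ℕ):ℝ) by norm_num, Real.rpow_natCast]]
      exact hs2eq
    have hrw2 : ∫ x, |g ε x| ^ (2:ℝ) ∂ν = A ε := by
      rw [show (fun x => |g ε x| ^ (2:ℝ)) = fun x => g ε x ^ 2 by
        funext x; rw [show (2:ℝ) = ((2:ℕ):ℝ) by norm_num, Real.rpow_natCast, sq_abs]]
    have cs' : ∫ x, s x * |g ε x| ∂ν ≤ Real.sqrt (A ε) := by
      calc ∫ x, s x * |g ε x| ∂ν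
          ≤ (∫ x, s x ^ (2:ℝ) ∂ν) ^ ((1:ℝ)/2) * (∫ x, |g ε x| ^ (2:ℝ) ∂ν) ^ ((1:ℝ)/2) := cs
        _ = Real.sqrt (A ε) := by
            rw [hrw1, hrw2, Real.one_rpow, one_mul, ← Real.sqrt_eq_rpow]
    calc ∫ x, |(pe ε x - p x) / ε - p x * ℓ x| ∂ν
        ≤ 2 * (∫ x, s x * |g ε x| ∂ν) + 2 * ε * A ε + 2 * ε * C := by
          rw [e1, e2, e3, e4, e5] at step1; exact step1
      _ ≤ 2 * Real.sqrt (A ε) + 2 * ε * A ε + 2 * ε * C := by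
          linarith [cs']
  -- squeeze
  have hAtend : Tendsto A (nhdsWithin 0 (Set.Ioi 0)) (nhds 0) := hqmd
  have hεtend : Tendsto (fun ε : ℝ => ε) (nhdsWithin 0 (Set.Ioi 0)) (nhds 0) :=
    tendsto_id.mono_left nhdsWithin_le_nhds
  have hBtend : Tendsto (fun ε => 2 * Real.sqrt (A ε) + 2 * ε * A ε + 2 * ε * C)
      (nhdsWithin 0 (Set.Ioi 0)) (nhds 0) := by
    have h1 : Tendsto (fun ε => Real.sqrt (A ε)) (nhdsWithin 0 (Set.Ioi 0)) (nhds 0) := by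
      have := (Real.continuous_sqrt.tendsto 0).comp hAtend
      rw [Real.sqrt_zero] at this; exact this
    have h2 := (hεtend.const_mul (2:ℝ)).mul hAtend
    have h3 := hεtend.const_mul (2*C)
    have hsum := ((h1.const_mul 2).add h2).add h3
    simp only [mul_zero, zero_mul, add_zero] at hsum
    convert hsum using 2 with ε
    ring
  refine squeeze_zero' ?_ ?_ hBtend
  · filter_upwards with ε
    exact integral_nonneg fun x => abs_nonneg _
  · filter_upwards [self_mem_nhdsWithin] with ε (hε : ε ∈ Set.Ioi 0)
    exact key ε hε
end

section
/- Let p, p_ε be as in a quadratic mean differentiable path with score ℓ̇, and let ψ be a bounded measurable function. Then ε⁻¹ ∫ ψ (p - p_ε) dν → -∫ ψ p ℓ̇ dν as ε ↓ 0. Equivalently, ε⁻¹ (P - P_ε)[ψ] → -P[ψ ℓ̇]. -/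
open MeasureTheory Filter

lemma l2mul {α : Type*} [MeasurableSpace α] {μ : Measure α} {f g : α → ℝ}
    (hf : MemLp f 2 μ) (hg : MemLp g 2 μ) : Integrable (fun x => f x * g x) μ := by
  have hf2 : Integrable (fun x => f x ^ 2) μ := (memLp_two_iff_integrable_sq hf.1).1 hf
  have hg2 : Integrable (fun x => g x ^ 2) μ := (memLp_two_iff_integrable_sq hg.1).1 hg
  refine Integrable.mono' (hf2.add hg2) (hf.1.mul hg.1) (ae_of_all _ fun x => ?_)
  simp only [Real.norm_eq_abs, abs_mul, Pi.add_apply]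
  nlinarith [sq_nonneg (|f x| - |g x|), sq_abs (f x), sq_abs (g x), abs_nonneg (f x), abs_nonneg (g x)]

lemma l2cs {α : Type*} [MeasurableSpace α] {μ : Measure α} {f g : α → ℝ}
    (hf : MemLp f 2 μ) (hg : MemLp g 2 μ) :
    ∫ x, |f x * g x| ∂μ ≤ Real.sqrt (∫ x, f x ^ 2 ∂μ) * Real.sqrt (∫ x, g x ^ 2 ∂μ) := by
  have h2 : (2 : ℝ).HolderConjugate 2 := Real.HolderConjugate.two_two
  have hof : ENNReal.ofReal (2:ℝ) = 2 := by norm_num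
  have := MeasureTheory.integral_mul_le_Lp_mul_Lq_of_nonneg h2 (f := fun x => |f x|)
    (g := fun x => |g x|) (ae_of_all _ fun x => abs_nonneg _) (ae_of_all _ fun x => abs_nonneg _)
    (by rw [hof]; exact hf.abs) (by rw [hof]; exact hg.abs)
  calc ∫ x, |f x * g x| ∂μ = ∫ x, |f x| * |g x| ∂μ := by simp [abs_mul]
    _ ≤ (∫ x, |f x| ^ (2:ℝ) ∂μ) ^ (1/(2:ℝ)) * (∫ x, |g x| ^ (2:ℝ) ∂μ) ^ (1/(2:ℝ)) := this
    _ = Real.sqrt (∫ x, f x ^ 2 ∂μ) * Real.sqrt (∫ x, g x ^ 2 ∂μ) := by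
        rw [Real.sqrt_eq_rpow, Real.sqrt_eq_rpow]
        congr 2 <;>
          refine integral_congr_ae (ae_of_all _ fun x => ?_) <;>
          simp [Real.rpow_natCast, sq_abs]

theorem stmt4 {𝒪 : Type*} [MeasurableSpace 𝒪] (ν : Measure 𝒪) [SigmaFinite ν]
    (p : 𝒪 → ℝ) (pe : ℝ → 𝒪 → ℝ) (ℓ ψ : 𝒪 → ℝ)
    (hp : Measurable p) (hpe : ∀ ε, Measurable (pe ε)) (hℓ : Measurable ℓ)
    (hψ : Measurable ψ) (Mψ : ℝ) (hψbd : ∀ x, |ψ x| ≤ Mψ)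
    (hp0 : ∀ x, 0 ≤ p x) (hpe0 : ∀ ε x, 0 ≤ pe ε x)
    (hpint : ∫ x, p x ∂ν = 1) (hpeint : ∀ ε, ∫ x, pe ε x ∂ν = 1)
    (hℓL2 : Integrable (fun x => p x * ℓ x ^ 2) ν)
    (hqmd : Tendsto (fun ε => ∫ x, ((Real.sqrt (pe ε x) - Real.sqrt (p x)) / ε
        - (1/2) * ℓ x * Real.sqrt (p x)) ^ 2 ∂ν) (nhdsWithin 0 (Set.Ioi 0)) (nhds 0)) :
    Tendsto (fun ε => ((∫ x, ψ x * p x ∂ν) - ∫ x, ψ x * pe ε x ∂ν) / ε)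
      (nhdsWithin 0 (Set.Ioi 0)) (nhds (-(∫ x, ψ x * (p x * ℓ x) ∂ν))) := by
  -- notation
  set t : 𝒪 → ℝ := fun x => Real.sqrt (p x) with ht_def
  set s : ℝ → 𝒪 → ℝ := fun ε x => Real.sqrt (pe ε x) with hs_def
  set g : 𝒪 → ℝ := fun x => (1/2) * ℓ x * Real.sqrt (p x) with hg_def
  set r : ℝ → 𝒪 → ℝ := fun ε x => (s ε x - t x) / ε - g x with hr_def
  have htsq : ∀ x, t x ^ 2 = p x := fun x => Real.sq_sqrt (hp0 x)
  have hssq : ∀ ε x, s ε x ^ 2 = pe ε x := fun ε x => Real.sq_sqrt (hpe0 ε x)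
  -- basic integrability
  have hpInt : Integrable p ν := by
    by_contra h; rw [integral_undef h] at hpint; norm_num at hpint
  have hpeInt : ∀ ε, Integrable (pe ε) ν := by
    intro ε; by_contra h
    have h2 := hpeint ε; rw [integral_undef h] at h2; norm_num at h2
  have htm : Measurable t := hp.sqrt
  have hsm : ∀ ε, Measurable (s ε) := fun ε => (hpe ε).sqrt
  have ht2 : MemLp t 2 ν := by
    refine (memLp_two_iff_integrable_sq htm.aestronglyMeasurable).2 ?_
    exact hpInt.congr (ae_of_all _ fun x => (htsq x).symm)
  have hs2 : ∀ ε, MemLp (s ε) 2 ν := by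
    intro ε
    refine (memLp_two_iff_integrable_sq (hsm ε).aestronglyMeasurable).2 ?_
    exact (hpeInt ε).congr (ae_of_all _ fun x => (hssq ε x).symm)
  have hgm : Measurable g := (measurable_const.mul hℓ).mul htm
  have hg2 : MemLp g 2 ν := by
    refine (memLp_two_iff_integrable_sq hgm.aestronglyMeasurable).2 ?_
    refine (hℓL2.const_mul (1/4)).congr (ae_of_all _ fun x => ?_)
    have h := Real.sq_sqrt (hp0 x)
    simp only [hg_def]
    linear_combination (-(1/4) * ℓ x ^ 2) * h
  have hr2 : ∀ ε, MemLp (r ε) 2 ν := by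
    intro ε
    have h1 : MemLp (fun x => (s ε x - t x) / ε) 2 ν := by
      simpa [div_eq_inv_mul] using ((hs2 ε).sub ht2).const_mul ε⁻¹
    exact h1.sub hg2
  -- product integrabilities
  have hplInt : Integrable (fun x => p x * ℓ x) ν := by
    refine ((l2mul ht2 hg2).const_mul 2).congr (ae_of_all _ fun x => ?_)
    have h := Real.sq_sqrt (hp0 x)
    simp only [hg_def, ht_def]
    linear_combination ℓ x * h
  have hbψ : ∀ᵐ x ∂ν, ‖ψ x‖ ≤ Mψ := ae_of_all _ fun x => hψbd x
  have J1 : Integrable (fun x => ψ x * p x) ν := hpInt.bdd_mul hψ.aestronglyMeasurable hbψ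
  have J2 : ∀ ε, Integrable (fun x => ψ x * pe ε x) ν :=
    fun ε => (hpeInt ε).bdd_mul hψ.aestronglyMeasurable hbψ
  have J3 : Integrable (fun x => ψ x * (p x * ℓ x)) ν :=
    hplInt.bdd_mul hψ.aestronglyMeasurable hbψ
  set I : ℝ := ∫ x, ψ x * (p x * ℓ x) ∂ν with hI_def
  set L : ℝ := Real.sqrt (∫ x, g x ^ 2 ∂ν) with hL_def
  set R : ℝ → ℝ := fun ε => Real.sqrt (∫ x, r ε x ^ 2 ∂ν) with hR_def
  -- R tends to 0
  have hR0 : Tendsto R (nhdsWithin 0 (Set.Ioi 0)) (nhds 0) := by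
    have : Tendsto Real.sqrt (nhds 0) (nhds 0) := by
      simpa using Real.continuous_sqrt.tendsto 0
    exact this.comp hqmd
  -- the bound function
  set B : ℝ → ℝ := fun ε => Mψ * (R ε * 2) + Mψ * ε * (L * R ε) + Mψ * ε * (L * L) with hB_def
  have hB0 : Tendsto B (nhdsWithin 0 (Set.Ioi 0)) (nhds 0) := by
    have hid : Tendsto (fun ε : ℝ => ε) (nhdsWithin 0 (Set.Ioi 0)) (nhds 0) :=
      tendsto_id.mono_left nhdsWithin_le_nhds
    have c2 : Tendsto (fun _ : ℝ => (2:ℝ)) (nhdsWithin 0 (Set.Ioi 0)) (nhds 2) :=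
      tendsto_const_nhds
    have cM : Tendsto (fun _ : ℝ => Mψ) (nhdsWithin 0 (Set.Ioi 0)) (nhds Mψ) :=
      tendsto_const_nhds
    have cL : Tendsto (fun _ : ℝ => L) (nhdsWithin 0 (Set.Ioi 0)) (nhds L) :=
      tendsto_const_nhds
    have hA := cM.mul (hR0.mul c2)
    have hB1 := (cM.mul hid).mul (cL.mul hR0)
    have hC := (cM.mul hid).mul (cL.mul cL)
    have h := (hA.add hB1).add hC
    simpa using h
  -- main bound, eventually
  have hkey : ∀ ε > (0:ℝ),
      |((∫ x, ψ x * p x ∂ν) - ∫ x, ψ x * pe ε x ∂ν) / ε - (-I)| ≤ B ε := by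
    intro ε hε
    have hεne : ε ≠ 0 := ne_of_gt hε
    have hM : 0 ≤ Mψ := by
      cases isEmpty_or_nonempty 𝒪 with
      | inl h => rw [integral_of_isEmpty] at hpint; norm_num at hpint
      | inr h => exact le_trans (abs_nonneg _) (hψbd (Classical.arbitrary 𝒪))
    have hg0 : ∀ x, g x = 1/2 * ℓ x * t x := fun x => rfl
    have hr0 : ∀ x, r ε x = (s ε x - t x) / ε - g x := fun x => rfl
    -- pointwise identity
    have hpoint : ∀ x, (ψ x * p x - ψ x * pe ε x) / ε + ψ x * (p x * ℓ x)
        = -(ψ x * (r ε x * (s ε x + t x) + ε * (g x * r ε x) + ε * (g x * g x))) := by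
      intro x
      rw [hr0 x, hg0 x, ← hssq ε x, ← htsq x]
      field_simp
      ring
    -- integrabilities
    have hadd : MemLp (fun x => s ε x + t x) 2 ν := (hs2 ε).add ht2
    have II1 : Integrable (fun x => r ε x * (s ε x + t x)) ν := l2mul (hr2 ε) hadd
    have II2 : Integrable (fun x => g x * r ε x) ν := l2mul hg2 (hr2 ε)
    have II3 : Integrable (fun x => g x * g x) ν := l2mul hg2 hg2
    have IF : Integrable
        (fun x => (ψ x * p x - ψ x * pe ε x) / ε + ψ x * (p x * ℓ x)) ν := by
      refine Integrable.congr ?_ (ae_of_all _ fun x => (hpoint x).symm)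
      exact ((II1.add (II2.const_mul ε) |>.add (II3.const_mul ε)).bdd_mul
        hψ.aestronglyMeasurable hbψ).neg
    -- the three Cauchy-Schwarz bounds
    have hint1 : Integrable (fun x => (s ε x + t x) ^ 2) ν :=
      (memLp_two_iff_integrable_sq ((hsm ε).add htm).aestronglyMeasurable).1 hadd
    have h4 : ∫ x, (s ε x + t x) ^ 2 ∂ν ≤ 4 := by
      have hint2 : Integrable (fun x => 2 * pe ε x + 2 * p x) ν := by
        exact ((hpeInt ε).const_mul 2).add (hpInt.const_mul 2)
      have mono := integral_mono hint1 hint2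
        (fun x => by nlinarith [sq_nonneg (s ε x - t x), hssq ε x, htsq x,
          Real.sqrt_nonneg (pe ε x), Real.sqrt_nonneg (p x)])
      rw [integral_add ((hpeInt ε).const_mul 2) (hpInt.const_mul 2),
        integral_const_mul, integral_const_mul, hpint, hpeint] at mono
      linarith
    have hsq4 : Real.sqrt (∫ x, (s ε x + t x) ^ 2 ∂ν) ≤ 2 := by
      have h2 : Real.sqrt 4 = 2 := by
        rw [show (4:ℝ) = 2 ^ 2 by norm_num, Real.sqrt_sq (by norm_num : (0:ℝ) ≤ 2)]
      calc Real.sqrt (∫ x, (s ε x + t x) ^ 2 ∂ν) ≤ Real.sqrt 4 := Real.sqrt_le_sqrt h4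
        _ = 2 := h2
    have c1 : ∫ x, |r ε x * (s ε x + t x)| ∂ν ≤ R ε * 2 := by
      refine le_trans (l2cs (hr2 ε) hadd) ?_
      exact mul_le_mul_of_nonneg_left hsq4 (Real.sqrt_nonneg _)
    have c2 : ∫ x, |g x * r ε x| ∂ν ≤ L * R ε := l2cs hg2 (hr2 ε)
    have c3 : ∫ x, |g x * g x| ∂ν ≤ L * L := l2cs hg2 hg2
    -- assemble
    have e1 : ((∫ x, ψ x * p x ∂ν) - ∫ x, ψ x * pe ε x ∂ν) / ε + I
        = ∫ x, ((ψ x * p x - ψ x * pe ε x) / ε + ψ x * (p x * ℓ x)) ∂ν := by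
      have hsubInt : Integrable (fun x => (ψ x * p x - ψ x * pe ε x) / ε) ν := by
        exact (J1.sub (J2 ε)).div_const ε
      have eA := integral_add hsubInt J3
      have eB := integral_div ε (fun x => ψ x * p x - ψ x * pe ε x) (μ := ν)
      have eC := integral_sub J1 (J2 ε)
      rw [eA, eB, eC]
    have hptbd : ∀ x, |(ψ x * p x - ψ x * pe ε x) / ε + ψ x * (p x * ℓ x)|
        ≤ Mψ * |r ε x * (s ε x + t x)| + Mψ * ε * |g x * r ε x| + Mψ * ε * |g x * g x| := by
      intro x
      rw [hpoint x, abs_neg, abs_mul]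
      have h1 : |r ε x * (s ε x + t x) + ε * (g x * r ε x) + ε * (g x * g x)|
          ≤ |r ε x * (s ε x + t x)| + ε * |g x * r ε x| + ε * |g x * g x| := by
        calc _ ≤ |r ε x * (s ε x + t x) + ε * (g x * r ε x)| + |ε * (g x * g x)| := abs_add_le _ _
          _ ≤ |r ε x * (s ε x + t x)| + |ε * (g x * r ε x)| + |ε * (g x * g x)| := by
              have := abs_add_le (r ε x * (s ε x + t x)) (ε * (g x * r ε x)); linarith
          _ = _ := by simp [abs_mul, abs_of_pos hε]
      calc |ψ x| * |r ε x * (s ε x + t x) + ε * (g x * r ε x) + ε * (g x * g x)|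
          ≤ Mψ * (|r ε x * (s ε x + t x)| + ε * |g x * r ε x| + ε * |g x * g x|) := by
            refine mul_le_mul (hψbd x) h1 (abs_nonneg _) hM
        _ = Mψ * |r ε x * (s ε x + t x)| + Mψ * ε * |g x * r ε x| + Mψ * ε * |g x * g x| := by
            ring
    have IA : Integrable (fun x => Mψ * |r ε x * (s ε x + t x)|) ν := II1.abs.const_mul Mψ
    have IB : Integrable (fun x => Mψ * ε * |g x * r ε x|) ν := II2.abs.const_mul (Mψ * ε)
    have IC : Integrable (fun x => Mψ * ε * |g x * g x|) ν := II3.abs.const_mul (Mψ * ε)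
    have IAB : Integrable (fun x => Mψ * |r ε x * (s ε x + t x)| + Mψ * ε * |g x * r ε x|) ν := by
      exact IA.add IB
    have IRHS : Integrable (fun x => Mψ * |r ε x * (s ε x + t x)|
        + Mψ * ε * |g x * r ε x| + Mψ * ε * |g x * g x|) ν := by
      exact IAB.add IC
    calc |((∫ x, ψ x * p x ∂ν) - ∫ x, ψ x * pe ε x ∂ν) / ε - (-I)|
        = |∫ x, ((ψ x * p x - ψ x * pe ε x) / ε + ψ x * (p x * ℓ x)) ∂ν| := by
          rw [sub_neg_eq_add, e1]
      _ ≤ ∫ x, |(ψ x * p x - ψ x * pe ε x) / ε + ψ x * (p x * ℓ x)| ∂ν := by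
          simpa [Real.norm_eq_abs] using
            norm_integral_le_integral_norm
              (fun x => (ψ x * p x - ψ x * pe ε x) / ε + ψ x * (p x * ℓ x)) (μ := ν)
      _ ≤ ∫ x, (Mψ * |r ε x * (s ε x + t x)| + Mψ * ε * |g x * r ε x|
            + Mψ * ε * |g x * g x|) ∂ν :=
          integral_mono IF.abs IRHS (fun x => hptbd x)
      _ = Mψ * (∫ x, |r ε x * (s ε x + t x)| ∂ν) + Mψ * ε * (∫ x, |g x * r ε x| ∂ν)
            + Mψ * ε * (∫ x, |g x * g x| ∂ν) := by
          rw [integral_add IAB IC, integral_add IA IB,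
            integral_const_mul, integral_const_mul, integral_const_mul]
      _ ≤ B ε := by
          have hMε : 0 ≤ Mψ * ε := mul_nonneg hM hε.le
          simp only [hB_def]
          gcongr
  -- conclude by squeeze
  rw [← tendsto_sub_nhds_zero_iff]
  refine squeeze_zero_norm' ?_ hB0
  filter_upwards [self_mem_nhdsWithin] with ε hε
  exact hkey ε hε
end

section
/- Let τ, τ_ε be measurable functions on a probability space (Ω, P) with |τ|, |τ_ε| ≤ 1, and suppose sup_w |τ(w) - τ_ε(w)| ≤ Cε for some constant C. Let α ∈ ℝ, r ≥ 1, and suppose the CDF γ of τ (under P) is continuous at α. Then E[ |1{τ ≤ α} - 1{τ_ε ≤ α}| · |α - τ_ε|^r ] = o(ε) as ε ↓ 0. -/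
open MeasureTheory Filter Asymptotics

theorem stmt8 {Ω : Type*} [MeasurableSpace Ω] (P : Measure Ω) [IsProbabilityMeasure P]
    (τ : Ω → ℝ) (T : ℝ → Ω → ℝ) (hτ : Measurable τ) (hT : ∀ ε, Measurable (T ε))
    (hbd : ∀ ω, |τ ω| ≤ 1) (hbdT : ∀ ε ω, |T ε ω| ≤ 1)
    (C : ℝ) (hC : 0 < C) (hsup : ∀ ε > 0, ∀ ω, |τ ω - T ε ω| ≤ C * ε)
    (α r : ℝ) (hr : 1 ≤ r) (hatom : P {ω | τ ω = α} = 0) :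
    (fun ε => ∫ ω, |(if τ ω ≤ α then (1:ℝ) else 0) - (if T ε ω ≤ α then 1 else 0)|
        * |α - T ε ω| ^ r ∂P) =o[nhdsWithin 0 (Set.Ioi 0)] (fun ε => ε) := by
  set s : ℝ → Set Ω := fun δ => {ω | |τ ω - α| ≤ δ} with hs
  have hmeas : ∀ δ, MeasurableSet (s δ) := fun δ =>
    measurableSet_le ((hτ.sub measurable_const).abs) measurable_const
  -- the intersection is the atom
  have hinter : (⋂ δ > (0:ℝ), s δ) = {ω | τ ω = α} := by
    ext ω
    simp only [Set.mem_iInter, Set.mem_setOf_eq, hs]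
    constructor
    · intro h
      by_contra hne
      have hpos : 0 < |τ ω - α| := abs_pos.mpr (sub_ne_zero.mpr hne)
      have := h (|τ ω - α| / 2) (by linarith)
      linarith
    · intro h δ hδ
      simp [h, le_of_lt hδ]
  have htend : Tendsto (fun δ => P (s δ)) (nhdsWithin 0 (Set.Ioi 0)) (nhds 0) := by
    have := tendsto_measure_biInter_gt (μ := P) (a := (0:ℝ))
      (fun δ _ => (hmeas δ).nullMeasurableSet)
      (fun i j _ hij => fun ω hω => le_trans hω hij)
      ⟨1, one_pos, by simp [measure_ne_top]⟩
    rwa [hinter, hatom] at this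
  have htendR : Tendsto (fun δ => (P (s δ)).toReal) (nhdsWithin 0 (Set.Ioi 0)) (nhds 0) := by
    simpa [Function.comp_def] using (ENNReal.tendsto_toReal (by simp)).comp htend
  have hmul : Tendsto (fun ε : ℝ => C * ε) (nhdsWithin 0 (Set.Ioi 0))
      (nhdsWithin 0 (Set.Ioi 0)) := by
    apply tendsto_nhdsWithin_of_tendsto_nhds_of_eventually_within
    · have h0 : Tendsto (fun ε : ℝ => C * ε) (nhds 0) (nhds (C * 0)) :=
        ((continuous_const.mul continuous_id).tendsto 0)
      simpa using h0.mono_left nhdsWithin_le_nhds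
    · filter_upwards [self_mem_nhdsWithin] with ε hε
      exact mul_pos hC hε
  have htend2 : Tendsto (fun ε => (P (s (C * ε))).toReal) (nhdsWithin 0 (Set.Ioi 0))
      (nhds 0) := htendR.comp hmul
  rw [isLittleO_iff]
  intro c hc
  have hsmall : ∀ᶠ ε in nhdsWithin 0 (Set.Ioi 0), C * ε ≤ 1 :=
    ((hmul.mono_right nhdsWithin_le_nhds).eventually (gt_mem_nhds one_pos)).mono
      fun ε h => h.le
  have hPsmall : ∀ᶠ ε in nhdsWithin 0 (Set.Ioi 0), (P (s (C * ε))).toReal < c / C :=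
    htend2.eventually (gt_mem_nhds (by positivity))
  filter_upwards [self_mem_nhdsWithin, hsmall, hPsmall] with ε hε hCε hP
  have hε0 : (0:ℝ) < ε := hε
  set f : Ω → ℝ := fun ω => |(if τ ω ≤ α then (1:ℝ) else 0) - (if T ε ω ≤ α then 1 else 0)|
      * |α - T ε ω| ^ r with hf
  have hfnonneg : ∀ ω, 0 ≤ f ω := fun ω =>
    mul_nonneg (abs_nonneg _) (Real.rpow_nonneg (abs_nonneg _) r)
  -- pointwise bound
  have hbound : ∀ ω, f ω ≤ (s (C * ε)).indicator (fun _ => C * ε) ω := by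
    intro ω
    by_cases hiff : (τ ω ≤ α ↔ T ε ω ≤ α)
    · have : f ω = 0 := by
        simp only [hf]
        by_cases h1 : τ ω ≤ α
        · simp [h1, hiff.mp h1]
        · have h2 : ¬ T ε ω ≤ α := fun h => h1 (hiff.mpr h)
          simp [h1, h2]
      rw [this]
      exact Set.indicator_nonneg (fun _ _ => by positivity) ω
    · -- indicators differ
      have hd := abs_le.mp (hsup ε hε0 ω)
      have hmem : ω ∈ s (C * ε) ∧ |α - T ε ω| ≤ C * ε := by
        by_cases h1 : τ ω ≤ α
        · have h2 : ¬ T ε ω ≤ α := fun h => hiff ⟨fun _ => h, fun _ => h1⟩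
          push_neg at h2
          constructor
          · simp only [hs, Set.mem_setOf_eq, abs_le]; constructor <;> linarith
          · rw [abs_le]; constructor <;> linarith
        · have h2 : T ε ω ≤ α := by
            by_contra h2
            exact hiff ⟨fun h => absurd h h1, fun h => absurd h h2⟩
          push_neg at h1
          constructor
          · simp only [hs, Set.mem_setOf_eq, abs_le]; constructor <;> linarith
          · rw [abs_le]; constructor <;> linarith
      have hrpow : |α - T ε ω| ^ r ≤ C * ε := by
        rcases eq_or_lt_of_le (abs_nonneg (α - T ε ω)) with h0 | h0
        · rw [← h0, Real.zero_rpow (by linarith : r ≠ 0)]; positivity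
        · calc |α - T ε ω| ^ r ≤ |α - T ε ω| ^ (1:ℝ) :=
                Real.rpow_le_rpow_of_exponent_ge h0 (le_trans hmem.2 hCε) hr
            _ = |α - T ε ω| := Real.rpow_one _
            _ ≤ C * ε := hmem.2
      have habs : |(if τ ω ≤ α then (1:ℝ) else 0) - (if T ε ω ≤ α then 1 else 0)| ≤ 1 := by
        split_ifs <;> simp
      calc f ω ≤ 1 * (C * ε) := by
            exact mul_le_mul habs hrpow (Real.rpow_nonneg (abs_nonneg _) r) one_pos.le
        _ = C * ε := one_mul _
        _ = (s (C * ε)).indicator (fun _ => C * ε) ω := by rw [Set.indicator_of_mem hmem.1]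
  have hgint : Integrable ((s (C * ε)).indicator (fun _ => C * ε)) P :=
    (integrable_const (C * ε)).indicator (hmeas _)
  have hint : ∫ ω, f ω ∂P ≤ ∫ ω, (s (C * ε)).indicator (fun _ => C * ε) ω ∂P :=
    integral_mono_of_nonneg (Filter.Eventually.of_forall hfnonneg) hgint
      (Filter.Eventually.of_forall hbound)
  have hgval : ∫ ω, (s (C * ε)).indicator (fun _ => C * ε) ω ∂P
      = (P (s (C * ε))).toReal * (C * ε) := by
    rw [integral_indicator_const _ (hmeas _)]; simp [mul_comm, measureReal_def]
  have hintnn : 0 ≤ ∫ ω, f ω ∂P := integral_nonneg hfnonneg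
  rw [Real.norm_of_nonneg hintnn, Real.norm_of_nonneg hε0.le]
  calc ∫ ω, f ω ∂P ≤ (P (s (C * ε))).toReal * (C * ε) := hgval ▸ hint
    _ ≤ (c / C) * (C * ε) := by
        apply mul_le_mul_of_nonneg_right hP.le (by positivity)
    _ = c * ε := by field_simp
end

section
/- Let P, P' be probability measures on a common space, with propensity functions π, π' : 𝒲 → [c, 1-c] for some c ∈ (0, 1/2), outcome regressions μ, μ' : {0,1} × 𝒲 → [0,1], CATE functions τ = μ(1,·) - μ(0,·), τ' = μ'(1,·) - μ'(0,·), and sublevel indicators η_α = 1{τ ≤ α}, η'_α = 1{τ' ≤ α}. Define Rem_α(P', P) = E_P[ (η'_α/π')(π - π')(μ(1,·) - μ'(1,·)) ] + E_P[ (η'_α/(1 - π'))(π' - π)(μ(0,·) - μ'(0,·)) ] + E_P[ (η'_α - η_α)(α - τ) ]. Then |Rem_α(P', P)| ≤ E_P[ |η'_α - η_α| · |τ' - τ| ] + √2 c⁻¹ ‖π' - π‖_{L²(P)} ‖μ' - μ‖_{L²(P)}, where ‖μ' - μ‖²_{L²(P)} = E_P[(μ'(1,W)-μ(1,W))²] +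 E_P[(μ'(0,W)-μ(0,W))²]. -/
open MeasureTheory Set

lemma my_int_bdd {𝒲 : Type*} [MeasurableSpace 𝒲] (P : Measure 𝒲) [IsProbabilityMeasure P]
    {f : 𝒲 → ℝ} (hm : Measurable f) (C : ℝ) (h : ∀ w, |f w| ≤ C) : Integrable f P :=
  (integrable_const C).mono' hm.aestronglyMeasurable (ae_of_all _ h)

lemma my_cs {𝒲 : Type*} [MeasurableSpace 𝒲] (P : Measure 𝒲) (f g : 𝒲 → ℝ)
    (hf2 : Integrable (fun w => f w ^ 2) P) (hg2 : Integrable (fun w => g w ^ 2) P)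
    (hfg : Integrable (fun w => |f w| * |g w|) P) :
    ∫ w, |f w| * |g w| ∂P ≤ Real.sqrt (∫ w, f w ^ 2 ∂P) * Real.sqrt (∫ w, g w ^ 2 ∂P) := by
  set A := ∫ w, f w ^ 2 ∂P with hA
  set B := ∫ w, g w ^ 2 ∂P with hB
  have hA0 : 0 ≤ A := integral_nonneg fun w => sq_nonneg _
  have hB0 : 0 ≤ B := integral_nonneg fun w => sq_nonneg _
  set I := ∫ w, |f w| * |g w| ∂P with hI
  have hI0 : 0 ≤ I := integral_nonneg fun w => mul_nonneg (abs_nonneg _) (abs_nonneg _)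
  have hsA : Real.sqrt A ^ 2 = A := Real.sq_sqrt hA0
  have hsB : Real.sqrt B ^ 2 = B := Real.sq_sqrt hB0
  have key : (2 * Real.sqrt A * Real.sqrt B) * I ≤ B * A + A * B := by
    have hmono : ∫ w, (2 * Real.sqrt A * Real.sqrt B) * (|f w| * |g w|) ∂P
        ≤ ∫ w, (B * f w ^ 2 + A * g w ^ 2) ∂P := by
      apply integral_mono (hfg.const_mul _) ((hf2.const_mul B).add (hg2.const_mul A))
      intro w
      show 2 * Real.sqrt A * Real.sqrt B * (|f w| * |g w|) ≤ B * f w ^ 2 + A * g w ^ 2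
      have h1 : 0 ≤ (Real.sqrt B * |f w| - Real.sqrt A * |g w|) ^ 2 := sq_nonneg _
      have h2 : f w ^ 2 = |f w| ^ 2 := (sq_abs _).symm
      have h3 : g w ^ 2 = |g w| ^ 2 := (sq_abs _).symm
      nlinarith [h1, h2, h3, hsA, hsB, abs_nonneg (f w), abs_nonneg (g w),
        Real.sqrt_nonneg A, Real.sqrt_nonneg B]
    rwa [integral_const_mul, integral_add (hf2.const_mul B) (hg2.const_mul A),
      integral_const_mul, integral_const_mul, ← hA, ← hB, ← hI] at hmono
  rcases eq_or_lt_of_le (mul_nonneg (Real.sqrt_nonneg A) (Real.sqrt_nonneg B)) with hS | hS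
  · -- sqrt A * sqrt B = 0, so A = 0 or B = 0
    have : A = 0 ∨ B = 0 := by
      rcases mul_eq_zero.mp hS.symm with h | h
      · exact Or.inl (by nlinarith)
      · exact Or.inr (by nlinarith)
    have hIz : I = 0 := by
      rcases this with h | h
      · have hf0 : (fun w => f w ^ 2) =ᵐ[P] 0 :=
          (integral_eq_zero_iff_of_nonneg (fun w => sq_nonneg _) hf2).mp (by rw [← hA]; exact h)
        rw [hI]
        rw [integral_eq_zero_iff_of_nonneg
          (fun w => mul_nonneg (abs_nonneg _) (abs_nonneg _)) hfg]
        filter_upwards [hf0] with w hw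
        have : f w = 0 := by
          have := hw
          simp only [Pi.zero_apply] at this
          nlinarith [sq_nonneg (f w)]
        simp [this]
      · have hg0 : (fun w => g w ^ 2) =ᵐ[P] 0 :=
          (integral_eq_zero_iff_of_nonneg (fun w => sq_nonneg _) hg2).mp (by rw [← hB]; exact h)
        rw [hI]
        rw [integral_eq_zero_iff_of_nonneg
          (fun w => mul_nonneg (abs_nonneg _) (abs_nonneg _)) hfg]
        filter_upwards [hg0] with w hw
        have : g w = 0 := by
          simp only [Pi.zero_apply] at hw
          nlinarith [sq_nonneg (g w)]
        simp [this]
    rw [hIz]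
    positivity
  · nlinarith [hS, key]

lemma my_sqrt_add (M1 M0 : ℝ) (h1 : 0 ≤ M1) (h0 : 0 ≤ M0) :
    Real.sqrt M1 + Real.sqrt M0 ≤ Real.sqrt 2 * Real.sqrt (M1 + M0) := by
  rw [← Real.sqrt_mul (by norm_num : (0:ℝ) ≤ 2)]
  have hsq : (Real.sqrt M1 + Real.sqrt M0) ^ 2 ≤ 2 * (M1 + M0) := by
    nlinarith [sq_nonneg (Real.sqrt M1 - Real.sqrt M0), Real.sq_sqrt h1, Real.sq_sqrt h0,
      Real.sqrt_nonneg M1, Real.sqrt_nonneg M0]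
  calc Real.sqrt M1 + Real.sqrt M0
      = Real.sqrt ((Real.sqrt M1 + Real.sqrt M0) ^ 2) :=
        (Real.sqrt_sq (by positivity)).symm
    _ ≤ Real.sqrt (2 * (M1 + M0)) := Real.sqrt_le_sqrt hsq


theorem stmt10 {𝒲 : Type*} [MeasurableSpace 𝒲] (P : Measure 𝒲) [IsProbabilityMeasure P]
    (c : ℝ) (hc : 0 < c) (hc2 : c < 1/2)
    (π π' : 𝒲 → ℝ) (μ μ' : Bool → 𝒲 → ℝ)
    (hπ : Measurable π) (hπ' : Measurable π')
    (hμ : ∀ a, Measurable (μ a)) (hμ' : ∀ a, Measurable (μ' a))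
    (hπbd : ∀ w, π w ∈ Set.Icc c (1 - c)) (hπ'bd : ∀ w, π' w ∈ Set.Icc c (1 - c))
    (hμbd : ∀ a w, μ a w ∈ Set.Icc (0:ℝ) 1) (hμ'bd : ∀ a w, μ' a w ∈ Set.Icc (0:ℝ) 1)
    (α : ℝ) :
    let τ : 𝒲 → ℝ := fun w => μ true w - μ false w
    let τ' : 𝒲 → ℝ := fun w => μ' true w - μ' false w
    let η : 𝒲 → ℝ := fun w => if τ w ≤ α then 1 else 0
    let η' : 𝒲 → ℝ := fun w => if τ' w ≤ α then 1 else 0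
    |(∫ w, (η' w / π' w) * (π w - π' w) * (μ true w - μ' true w) ∂P)
      + (∫ w, (η' w / (1 - π' w)) * (π' w - π w) * (μ false w - μ' false w) ∂P)
      + (∫ w, (η' w - η w) * (α - τ w) ∂P)|
      ≤ (∫ w, |η' w - η w| * |τ' w - τ w| ∂P)
        + Real.sqrt 2 / c * Real.sqrt (∫ w, (π' w - π w) ^ 2 ∂P)
          * Real.sqrt ((∫ w, (μ' true w - μ true w) ^ 2 ∂P)
              + (∫ w, (μ' false w - μ false w) ^ 2 ∂P)) := by
  intro τ τ' η η'
  -- basic facts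
  have hcpos : (0:ℝ) < c := hc
  have hτm : Measurable τ := (hμ true).sub (hμ false)
  have hτ'm : Measurable τ' := (hμ' true).sub (hμ' false)
  have hηm : Measurable η :=
    Measurable.ite (measurableSet_le hτm measurable_const) measurable_const measurable_const
  have hη'm : Measurable η' :=
    Measurable.ite (measurableSet_le hτ'm measurable_const) measurable_const measurable_const
  have hη'01 : ∀ w, η' w = 0 ∨ η' w = 1 := by
    intro w; simp only [η']; split <;> simp
  have hη'abs : ∀ w, |η' w| ≤ 1 := by
    intro w; rcases hη'01 w with h | h <;> simp [h]
  have hπ'c : ∀ w, c ≤ π' w := fun w => (hπ'bd w).1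
  have h1π'c : ∀ w, c ≤ 1 - π' w := fun w => by have := (hπ'bd w).2; linarith
  -- pointwise bounds on differences
  have hπd : ∀ w, |π' w - π w| ≤ 1 := by
    intro w
    have h1 := (hπbd w).1; have h2 := (hπbd w).2
    have h3 := (hπ'bd w).1; have h4 := (hπ'bd w).2
    rw [abs_le]; constructor <;> linarith
  have hμd : ∀ a w, |μ' a w - μ a w| ≤ 1 := by
    intro a w
    have h1 := (hμbd a w).1; have h2 := (hμbd a w).2
    have h3 := (hμ'bd a w).1; have h4 := (hμ'bd a w).2
    rw [abs_le]; constructor <;> linarith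
  have hτd : ∀ w, |τ' w - τ w| ≤ 2 := by
    intro w
    have h1 := (hμbd true w).1; have h2 := (hμbd true w).2
    have h3 := (hμbd false w).1; have h4 := (hμbd false w).2
    have h5 := (hμ'bd true w).1; have h6 := (hμ'bd true w).2
    have h7 := (hμ'bd false w).1; have h8 := (hμ'bd false w).2
    simp only [τ, τ']
    rw [abs_le]; constructor <;> linarith
  -- integrability
  have hiπ2 : Integrable (fun w => (π' w - π w) ^ 2) P := by
    apply my_int_bdd P ((hπ'.sub hπ).pow_const 2) 1
    intro w
    rw [abs_of_nonneg (sq_nonneg _)]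
    calc (π' w - π w) ^ 2 = |π' w - π w| ^ 2 := (sq_abs _).symm
      _ ≤ 1 ^ 2 := by
          apply pow_le_pow_left₀ (abs_nonneg _) (hπd w)
      _ = 1 := one_pow 2
  have hiμ2 : ∀ a, Integrable (fun w => (μ' a w - μ a w) ^ 2) P := by
    intro a
    apply my_int_bdd P (((hμ' a).sub (hμ a)).pow_const 2) 1
    intro w
    rw [abs_of_nonneg (sq_nonneg _)]
    calc (μ' a w - μ a w) ^ 2 = |μ' a w - μ a w| ^ 2 := (sq_abs _).symm
      _ ≤ 1 ^ 2 := pow_le_pow_left₀ (abs_nonneg _) (hμd a w) 2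
      _ = 1 := one_pow 2
  have hiprod : ∀ a, Integrable (fun w => |π' w - π w| * |μ' a w - μ a w|) P := by
    intro a
    apply my_int_bdd P ((hπ'.sub hπ).abs.mul ((hμ' a).sub (hμ a)).abs) 1
    intro w
    rw [abs_of_nonneg (mul_nonneg (abs_nonneg _) (abs_nonneg _))]
    calc |π' w - π w| * |μ' a w - μ a w| ≤ 1 * 1 :=
        mul_le_mul (hπd w) (hμd a w) (abs_nonneg _) one_pos.le
      _ = 1 := one_mul 1
  have hiT3 : Integrable (fun w => |η' w - η w| * |τ' w - τ w|) P := by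
    apply my_int_bdd P ((hη'm.sub hηm).abs.mul (hτ'm.sub hτm).abs) 2
    intro w
    rw [abs_of_nonneg (mul_nonneg (abs_nonneg _) (abs_nonneg _))]
    have hd : |η' w - η w| ≤ 1 := by
      simp only [η, η']
      split <;> split <;> norm_num
    calc |η' w - η w| * |τ' w - τ w| ≤ 1 * 2 :=
        mul_le_mul hd (hτd w) (abs_nonneg _) one_pos.le
      _ = 2 := one_mul 2
  -- pointwise bounds on the three integrands
  have hb1 : ∀ w, |(η' w / π' w) * (π w - π' w) * (μ true w - μ' true w)|
      ≤ 1 / c * (|π' w - π w| * |μ' true w - μ true w|) := by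
    intro w
    have hq : |η' w / π' w| ≤ 1 / c := by
      rw [abs_div, abs_of_pos (lt_of_lt_of_le hc (hπ'c w))]
      exact div_le_div₀ one_pos.le (hη'abs w) hc (hπ'c w)
    rw [abs_mul, abs_mul, abs_sub_comm (π w) (π' w), abs_sub_comm (μ true w) (μ' true w),
      mul_assoc]
    exact mul_le_mul_of_nonneg_right hq (by positivity)
  have hb2 : ∀ w, |(η' w / (1 - π' w)) * (π' w - π w) * (μ false w - μ' false w)|
      ≤ 1 / c * (|π' w - π w| * |μ' false w - μ false w|) := by
    intro w
    have hq : |η' w / (1 - π' w)| ≤ 1 / c := by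
      rw [abs_div, abs_of_pos (lt_of_lt_of_le hc (h1π'c w))]
      exact div_le_div₀ one_pos.le (hη'abs w) hc (h1π'c w)
    rw [abs_mul, abs_mul, abs_sub_comm (μ false w) (μ' false w), mul_assoc]
    exact mul_le_mul_of_nonneg_right hq (by positivity)
  have hb3 : ∀ w, |(η' w - η w) * (α - τ w)| ≤ |η' w - η w| * |τ' w - τ w| := by
    intro w
    rw [abs_mul]
    by_cases h : τ w ≤ α <;> by_cases h' : τ' w ≤ α
    · simp only [η, η', if_pos h, if_pos h']; simp
    · simp only [η, η', if_pos h, if_neg h']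
      push_neg at h'
      have h1 : |α - τ w| = α - τ w := abs_of_nonneg (by linarith)
      have h2 : τ' w - τ w ≤ |τ' w - τ w| := le_abs_self _
      rw [h1]
      norm_num
      linarith
    · simp only [η, η', if_neg h, if_pos h']
      push_neg at h
      have h1 : |α - τ w| = τ w - α := by rw [abs_of_neg (by linarith : α - τ w < 0)]; ring
      have h2 : τ w - τ' w ≤ |τ' w - τ w| := by rw [abs_sub_comm]; exact le_abs_self _
      rw [h1]
      norm_num
      linarith
    · simp only [η, η', if_neg h, if_neg h']; simp
  -- integrability of the three integrands
  have hi1 : Integrable (fun w => (η' w / π' w) * (π w - π' w) * (μ true w - μ' true w)) P := by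
    apply my_int_bdd P (((hη'm.div hπ').mul (hπ.sub hπ')).mul ((hμ true).sub (hμ' true))) (1/c)
    intro w
    calc |(η' w / π' w) * (π w - π' w) * (μ true w - μ' true w)|
        ≤ 1 / c * (|π' w - π w| * |μ' true w - μ true w|) := hb1 w
      _ ≤ 1 / c * (1 * 1) := by
          apply mul_le_mul_of_nonneg_left _ (by positivity)
          exact mul_le_mul (hπd w) (hμd true w) (abs_nonneg _) one_pos.le
      _ = 1 / c := by ring
  have hi2 : Integrable
      (fun w => (η' w / (1 - π' w)) * (π' w - π w) * (μ false w - μ' false w)) P := by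
    apply my_int_bdd P (((hη'm.div (measurable_const.sub hπ')).mul (hπ'.sub hπ)).mul
      ((hμ false).sub (hμ' false))) (1/c)
    intro w
    calc |(η' w / (1 - π' w)) * (π' w - π w) * (μ false w - μ' false w)|
        ≤ 1 / c * (|π' w - π w| * |μ' false w - μ false w|) := hb2 w
      _ ≤ 1 / c * (1 * 1) := by
          apply mul_le_mul_of_nonneg_left _ (by positivity)
          exact mul_le_mul (hπd w) (hμd false w) (abs_nonneg _) one_pos.le
      _ = 1 / c := by ring
  have hi3 : Integrable (fun w => (η' w - η w) * (α - τ w)) P := by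
    apply my_int_bdd P ((hη'm.sub hηm).mul (measurable_const.sub hτm)) 2
    intro w
    calc |(η' w - η w) * (α - τ w)| ≤ |η' w - η w| * |τ' w - τ w| := hb3 w
      _ ≤ 1 * 2 := mul_le_mul (by simp only [η, η']; split <;> split <;> norm_num)
          (hτd w) (abs_nonneg _) one_pos.le
      _ = 2 := one_mul 2
  -- bounds on each integral
  set Sπ := Real.sqrt (∫ w, (π' w - π w) ^ 2 ∂P) with hSπ
  have hPi0 : 0 ≤ Sπ := Real.sqrt_nonneg _
  have hT1 : |∫ w, (η' w / π' w) * (π w - π' w) * (μ true w - μ' true w) ∂P|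
      ≤ 1 / c * (Sπ * Real.sqrt (∫ w, (μ' true w - μ true w) ^ 2 ∂P)) := by
    calc |∫ w, (η' w / π' w) * (π w - π' w) * (μ true w - μ' true w) ∂P|
        ≤ ∫ w, |(η' w / π' w) * (π w - π' w) * (μ true w - μ' true w)| ∂P := by
          simpa only [Real.norm_eq_abs] using norm_integral_le_integral_norm
            (fun w => (η' w / π' w) * (π w - π' w) * (μ true w - μ' true w)) (μ := P)
      _ ≤ ∫ w, 1 / c * (|π' w - π w| * |μ' true w - μ true w|) ∂P :=
          integral_mono hi1.abs ((hiprod true).const_mul _) hb1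
      _ = 1 / c * ∫ w, |π' w - π w| * |μ' true w - μ true w| ∂P := integral_const_mul _ _
      _ ≤ 1 / c * (Sπ * Real.sqrt (∫ w, (μ' true w - μ true w) ^ 2 ∂P)) := by
          apply mul_le_mul_of_nonneg_left _ (by positivity)
          exact my_cs P _ _ hiπ2 (hiμ2 true) (hiprod true)
  have hT2 : |∫ w, (η' w / (1 - π' w)) * (π' w - π w) * (μ false w - μ' false w) ∂P|
      ≤ 1 / c * (Sπ * Real.sqrt (∫ w, (μ' false w - μ false w) ^ 2 ∂P)) := by
    calc |∫ w, (η' w / (1 - π' w)) * (π' w - π w) * (μ false w - μ' false w) ∂P|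
        ≤ ∫ w, |(η' w / (1 - π' w)) * (π' w - π w) * (μ false w - μ' false w)| ∂P := by
          simpa only [Real.norm_eq_abs] using norm_integral_le_integral_norm
            (fun w => (η' w / (1 - π' w)) * (π' w - π w) * (μ false w - μ' false w)) (μ := P)
      _ ≤ ∫ w, 1 / c * (|π' w - π w| * |μ' false w - μ false w|) ∂P :=
          integral_mono hi2.abs ((hiprod false).const_mul _) hb2
      _ = 1 / c * ∫ w, |π' w - π w| * |μ' false w - μ false w| ∂P := integral_const_mul _ _
      _ ≤ 1 / c * (Sπ * Real.sqrt (∫ w, (μ' false w - μ false w) ^ 2 ∂P)) := by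
          apply mul_le_mul_of_nonneg_left _ (by positivity)
          exact my_cs P _ _ hiπ2 (hiμ2 false) (hiprod false)
  have hT3 : |∫ w, (η' w - η w) * (α - τ w) ∂P| ≤ ∫ w, |η' w - η w| * |τ' w - τ w| ∂P := by
    calc |∫ w, (η' w - η w) * (α - τ w) ∂P|
        ≤ ∫ w, |(η' w - η w) * (α - τ w)| ∂P := by
          simpa only [Real.norm_eq_abs] using norm_integral_le_integral_norm
            (fun w => (η' w - η w) * (α - τ w)) (μ := P)
      _ ≤ ∫ w, |η' w - η w| * |τ' w - τ w| ∂P := integral_mono hi3.abs hiT3 hb3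
  -- combine
  set M1 := ∫ w, (μ' true w - μ true w) ^ 2 ∂P with hM1
  set M0 := ∫ w, (μ' false w - μ false w) ^ 2 ∂P with hM0
  have hM10 : 0 ≤ M1 := integral_nonneg fun w => sq_nonneg _
  have hM00 : 0 ≤ M0 := integral_nonneg fun w => sq_nonneg _
  have hfin : 1 / c * (Sπ * Real.sqrt M1) + 1 / c * (Sπ * Real.sqrt M0)
      ≤ Real.sqrt 2 / c * Sπ * Real.sqrt (M1 + M0) := by
    have key := my_sqrt_add M1 M0 hM10 hM00
    calc 1 / c * (Sπ * Real.sqrt M1) + 1 / c * (Sπ * Real.sqrt M0)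
        = 1 / c * Sπ * (Real.sqrt M1 + Real.sqrt M0) := by ring
      _ ≤ 1 / c * Sπ * (Real.sqrt 2 * Real.sqrt (M1 + M0)) :=
          mul_le_mul_of_nonneg_left key (by positivity)
      _ = Real.sqrt 2 / c * Sπ * Real.sqrt (M1 + M0) := by ring
  calc |(∫ w, (η' w / π' w) * (π w - π' w) * (μ true w - μ' true w) ∂P)
      + (∫ w, (η' w / (1 - π' w)) * (π' w - π w) * (μ false w - μ' false w) ∂P)
      + (∫ w, (η' w - η w) * (α - τ w) ∂P)|
      ≤ |∫ w, (η' w / π' w) * (π w - π' w) * (μ true w - μ' true w) ∂P|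
        + |∫ w, (η' w / (1 - π' w)) * (π' w - π w) * (μ false w - μ' false w) ∂P|
        + |∫ w, (η' w - η w) * (α - τ w) ∂P| := by
        exact (abs_add_le _ _).trans (add_le_add_left (abs_add_le _ _) _)
    _ ≤ 1 / c * (Sπ * Real.sqrt M1) + 1 / c * (Sπ * Real.sqrt M0)
        + ∫ w, |η' w - η w| * |τ' w - τ w| ∂P := add_le_add (add_le_add hT1 hT2) hT3
    _ ≤ (∫ w, |η' w - η w| * |τ' w - τ w| ∂P) + Real.sqrt 2 / c * Sπ * Real.sqrt (M1 + M0) := by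
        linarith [hfin]
end

section
/- Let f, g : [a, b] → ℝ be bounded measurable and let f*, g* denote their increasing rearrangements (generalized inverses of x ↦ m({f ≤ x}), resp. g). Then ‖f* - g*‖_{L^p([a,b])} ≤ ‖f - g‖_{L^p([a,b])} for every p ∈ [1, ∞]. In particular, if g is nondecreasing (so g* = g a.e.), rearranging an estimator f of g weakly improves its L^p approximation error: ‖f* - g‖_{L^p} ≤ ‖f - g‖_{L^p}. -/
open MeasureTheory Set ENNReal

/-- The increasing rearrangement of `f` on `[a,b]`:
`f*(α) = inf { x | volume {u ∈ [a,b] | f u ≤ x} ≥ α - a }`. -/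
noncomputable def rearrangeOn (a b : ℝ) (f : ℝ → ℝ) : ℝ → ℝ := fun α =>
  sInf {x : ℝ | ENNReal.ofReal (α - a) ≤ volume {u ∈ Set.Icc a b | f u ≤ x}}

namespace Stmt16Aux

noncomputable def distrib (a b : ℝ) (f : ℝ → ℝ) (x : ℝ) : ℝ≥0∞ :=
  volume {u ∈ Set.Icc a b | f u ≤ x}

lemma rearrange_eq (a b : ℝ) (f : ℝ → ℝ) (α : ℝ) :
    rearrangeOn a b f α = sInf {x : ℝ | ENNReal.ofReal (α - a) ≤ distrib a b f x} := rfl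

variable {a b M x y c : ℝ} {f : ℝ → ℝ}

lemma distrib_set_eq (a b : ℝ) (f : ℝ → ℝ) (x : ℝ) :
    {u ∈ Set.Icc a b | f u ≤ x} = Set.Icc a b ∩ f ⁻¹' (Set.Iic x) := rfl

lemma distrib_measurableSet (hf : Measurable f) (a b x : ℝ) :
    MeasurableSet {u ∈ Set.Icc a b | f u ≤ x} :=
  measurableSet_Icc.inter (hf measurableSet_Iic)

lemma distrib_mono (hxy : x ≤ y) : distrib a b f x ≤ distrib a b f y :=
  measure_mono (fun u hu => ⟨hu.1, hu.2.trans hxy⟩)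

lemma distrib_le : distrib a b f x ≤ ENNReal.ofReal (b - a) := by
  calc distrib a b f x ≤ volume (Set.Icc a b) := measure_mono (fun u hu => hu.1)
  _ = ENNReal.ofReal (b - a) := Real.volume_Icc

lemma distrib_ne_top : distrib a b f x ≠ ∞ :=
  ne_top_of_le_ne_top ENNReal.ofReal_ne_top distrib_le

lemma distrib_eq_of_ge (hfb : ∀ u ∈ Set.Icc a b, |f u| ≤ M) (hx : M ≤ x) :
    distrib a b f x = ENNReal.ofReal (b - a) := by
  have : {u ∈ Set.Icc a b | f u ≤ x} = Set.Icc a b := by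
    ext u
    simp only [mem_setOf_eq, mem_sep_iff, and_iff_left_iff_imp]
    exact fun hu => le_trans (le_trans (le_abs_self _) (hfb u hu)) hx
  rw [distrib, this, Real.volume_Icc]

lemma distrib_eq_zero (hfb : ∀ u ∈ Set.Icc a b, |f u| ≤ M) (hx : x < -M) :
    distrib a b f x = 0 := by
  have : {u ∈ Set.Icc a b | f u ≤ x} = ∅ := by
    ext u
    simp only [mem_sep_iff, mem_empty_iff_false, iff_false, not_and]
    intro hu hle
    have := neg_abs_le (f u)
    have := hfb u hu
    nlinarith [abs_nonneg (f u)]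
  rw [distrib, this, measure_empty]

lemma le_distrib_of_forall (hf : Measurable f)
    (h : ∀ ε : ℝ, 0 < ε → c ≤ (distrib a b f (x + ε)).toReal) :
    ENNReal.ofReal c ≤ distrib a b f x := by
  set s : ℕ → Set ℝ := fun n => {u ∈ Set.Icc a b | f u ≤ x + 1 / (n + 1)} with hs
  have hiInter : ⋂ n, s n = {u ∈ Set.Icc a b | f u ≤ x} := by
    ext u
    simp only [hs, mem_iInter, mem_sep_iff]
    constructor
    · intro h'
      refine ⟨(h' 0).1, ?_⟩
      by_contra hlt
      push_neg at hlt
      obtain ⟨n, hn⟩ := exists_nat_one_div_lt (sub_pos.mpr hlt)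
      have := (h' n).2
      linarith
    · intro h' n
      have : (0:ℝ) < 1 / (n + 1) := by positivity
      exact ⟨h'.1, by linarith [h'.2]⟩
  have hmeas : ∀ n, NullMeasurableSet (s n) volume :=
    fun n => (distrib_measurableSet hf a b _).nullMeasurableSet
  have hdir : Directed (fun x1 x2 => x1 ⊇ x2) s := by
    intro m n
    refine ⟨max m n, ?_, ?_⟩ <;>
    · intro u hu
      refine ⟨hu.1, hu.2.trans ?_⟩
      have h1 : ((m:ℝ) + 1 ≤ (max m n : ℕ) + 1) ∧ ((n:ℝ) + 1 ≤ (max m n : ℕ) + 1) := by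
        constructor <;> [skip; skip] <;>
          · have := Nat.cast_le (α := ℝ) |>.mpr (le_max_left m n)
            have := Nat.cast_le (α := ℝ) |>.mpr (le_max_right m n)
            linarith
      have h2 : (1:ℝ)/((max m n : ℕ) + 1) ≤ 1/(m+1) := by
        apply one_div_le_one_div_of_le (by positivity) h1.1
      have h3 : (1:ℝ)/((max m n : ℕ) + 1) ≤ 1/(n+1) := by
        apply one_div_le_one_div_of_le (by positivity) h1.2
      first | linarith | linarith
  have hfin : ∃ n, volume (s n) ≠ ∞ := ⟨0, distrib_ne_top⟩
  have key : volume (⋂ n, s n) = ⨅ n, volume (s n) :=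
    Directed.measure_iInter hmeas hdir hfin
  have hrw : distrib a b f x = ⨅ n, volume (s n) := by
    rw [← key, hiInter]; rfl
  rw [hrw]
  refine le_iInf fun n => ?_
  have hn : (0:ℝ) < 1 / (n + 1) := by positivity
  have := h _ hn
  calc ENNReal.ofReal c ≤ ENNReal.ofReal (distrib a b f (x + 1/(n+1))).toReal :=
        ENNReal.ofReal_le_ofReal this
  _ = distrib a b f (x + 1/(n+1)) := ENNReal.ofReal_toReal distrib_ne_top
  _ = volume (s n) := rfl


section Quantile

variable {a b M x α : ℝ} {f : ℝ → ℝ}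

/-- The sublevel set defining the rearrangement. -/
def qSet (a b : ℝ) (f : ℝ → ℝ) (α : ℝ) : Set ℝ :=
  {x : ℝ | ENNReal.ofReal (α - a) ≤ distrib a b f x}

lemma rearrange_eq' (a b : ℝ) (f : ℝ → ℝ) (α : ℝ) :
    rearrangeOn a b f α = sInf (qSet a b f α) := rearrange_eq a b f α

lemma mem_qSet_of_ge (hfb : ∀ u ∈ Set.Icc a b, |f u| ≤ M) (hα : α ≤ b) (hx : M ≤ x) :
    x ∈ qSet a b f α := by
  rw [qSet, mem_setOf_eq, distrib_eq_of_ge hfb hx]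
  exact ENNReal.ofReal_le_ofReal (by linarith)

lemma qSet_nonempty (hfb : ∀ u ∈ Set.Icc a b, |f u| ≤ M) (hα : α ≤ b) :
    (qSet a b f α).Nonempty := ⟨M, mem_qSet_of_ge hfb hα le_rfl⟩

lemma qSet_bddBelow (hfb : ∀ u ∈ Set.Icc a b, |f u| ≤ M) (hα : a < α) :
    BddBelow (qSet a b f α) := by
  refine ⟨-M, fun y hy => ?_⟩
  by_contra hlt
  push_neg at hlt
  rw [qSet, mem_setOf_eq, distrib_eq_zero hfb hlt, nonpos_iff_eq_zero,
    ENNReal.ofReal_eq_zero] at hy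
  linarith

lemma rearrange_le_iff (hf : Measurable f) (hfb : ∀ u ∈ Set.Icc a b, |f u| ≤ M)
    (hα : α ∈ Set.Ioc a b) :
    rearrangeOn a b f α ≤ x ↔ ENNReal.ofReal (α - a) ≤ distrib a b f x := by
  rw [rearrange_eq']
  constructor
  · intro hle
    refine le_distrib_of_forall hf (fun ε hε => ?_)
    have hlt : sInf (qSet a b f α) < x + ε := by linarith
    obtain ⟨y, hy, hyx⟩ := exists_lt_of_csInf_lt (qSet_nonempty hfb hα.2) hlt
    have : ENNReal.ofReal (α - a) ≤ distrib a b f (x + ε) :=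
      le_trans hy (distrib_mono hyx.le)
    calc α - a ≤ (distrib a b f (x+ε)).toReal := by
          rw [← ENNReal.ofReal_le_iff_le_toReal distrib_ne_top] at *
          exact this
    _ = _ := rfl
  · intro hle
    exact csInf_le (qSet_bddBelow hfb hα.1) hle

lemma neg_le_rearrange (hfb : ∀ u ∈ Set.Icc a b, |f u| ≤ M) (hα : α ∈ Set.Ioc a b) :
    -M ≤ rearrangeOn a b f α := by
  rw [rearrange_eq']
  refine le_csInf (qSet_nonempty hfb hα.2) (fun y hy => ?_)
  by_contra hlt
  push_neg at hlt
  rw [qSet, mem_setOf_eq, distrib_eq_zero hfb hlt, nonpos_iff_eq_zero,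
    ENNReal.ofReal_eq_zero] at hy
  have := hα.1
  linarith

lemma rearrange_le_M (hfb : ∀ u ∈ Set.Icc a b, |f u| ≤ M) (hα : α ∈ Set.Ioc a b) :
    rearrangeOn a b f α ≤ M := by
  rw [rearrange_eq']
  exact csInf_le (qSet_bddBelow hfb hα.1) (mem_qSet_of_ge hfb hα.2 le_rfl)

lemma rearrange_monotoneOn (hfb : ∀ u ∈ Set.Icc a b, |f u| ≤ M) :
    MonotoneOn (rearrangeOn a b f) (Set.Ioc a b) := by
  intro α hα α' hα' hle
  rw [rearrange_eq', rearrange_eq']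
  refine csInf_le_csInf (qSet_bddBelow hfb hα.1) (qSet_nonempty hfb hα'.2) (fun y hy => ?_)
  exact le_trans (ENNReal.ofReal_le_ofReal (by linarith)) hy

/-- sublevel sets of the rearrangement are intervals -/
lemma rearrange_sublevel_eq (hab : a < b) (hf : Measurable f)
    (hfb : ∀ u ∈ Set.Icc a b, |f u| ≤ M) (x : ℝ) :
    {α | rearrangeOn a b f α ≤ x} ∩ Set.Ioc a b
      = Set.Ioc a (a + (distrib a b f x).toReal) := by
  have hD : (distrib a b f x).toReal ≤ b - a := by
    have h := @distrib_le a b x f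
    calc (distrib a b f x).toReal ≤ (ENNReal.ofReal (b-a)).toReal :=
      ENNReal.toReal_mono ENNReal.ofReal_ne_top h
    _ = b - a := ENNReal.toReal_ofReal (by linarith)
  ext α
  simp only [mem_inter_iff, mem_setOf_eq, mem_Ioc]
  constructor
  · rintro ⟨hle, hmem⟩
    rw [rearrange_le_iff hf hfb hmem, ENNReal.ofReal_le_iff_le_toReal distrib_ne_top] at hle
    exact ⟨hmem.1, by linarith⟩
  · rintro ⟨h1, h2⟩
    have hmem : α ∈ Set.Ioc a b := ⟨h1, by linarith⟩
    refine ⟨?_, hmem⟩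
    rw [rearrange_le_iff hf hfb hmem, ENNReal.ofReal_le_iff_le_toReal distrib_ne_top]
    linarith

lemma volume_rearrange_sublevel (hab : a < b) (hf : Measurable f)
    (hfb : ∀ u ∈ Set.Icc a b, |f u| ≤ M) (x : ℝ) :
    volume.restrict (Set.Ioc a b) {α | rearrangeOn a b f α ≤ x} = distrib a b f x := by
  rw [Measure.restrict_apply' measurableSet_Ioc, rearrange_sublevel_eq hab hf hfb,
    Real.volume_Ioc]
  simp only [add_sub_cancel_left]
  exact ENNReal.ofReal_toReal distrib_ne_top

lemma distrib_eq_restrict_Ioc (a b x : ℝ) (f : ℝ → ℝ) :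
    distrib a b f x = volume.restrict (Set.Ioc a b) {u | f u ≤ x} := by
  rw [Measure.restrict_apply' measurableSet_Ioc]
  apply le_antisymm
  · calc distrib a b f x = volume ({u | f u ≤ x} ∩ Set.Icc a b) := by
          rw [distrib]; congr 1; ext u; simp [mem_inter_iff, and_comm]
    _ ≤ volume (({u | f u ≤ x} ∩ Set.Ioc a b) ∪ {a}) := by
          apply measure_mono
          rintro u ⟨hu, hua, hub⟩
          rcases eq_or_lt_of_le hua with h | h
          · exact Or.inr (by simp [← h])
          · exact Or.inl ⟨hu, h, hub⟩
    _ ≤ volume ({u | f u ≤ x} ∩ Set.Ioc a b) + volume ({a} : Set ℝ) := measure_union_le _ _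
    _ = volume ({u | f u ≤ x} ∩ Set.Ioc a b) := by simp
  · apply measure_mono
    rintro u ⟨hu, hua, hub⟩
    exact ⟨⟨hua.le, hub⟩, hu⟩

/-- The master comparison lemma. -/
lemma master (hab : a < b) {g : ℝ → ℝ} (hf : Measurable f)
    (hfb : ∀ u ∈ Set.Icc a b, |f u| ≤ M) (hg : Measurable g)
    (hgb : ∀ u ∈ Set.Icc a b, |g u| ≤ M) (s t : ℝ) :
    volume.restrict (Set.Ioc a b) {α | rearrangeOn a b f α ≤ s ∧ t < rearrangeOn a b g α}
      ≤ volume.restrict (Set.Ioc a b) {u | f u ≤ s ∧ t < g u} := by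
  set Fs := (distrib a b f s).toReal with hFs
  set Gt := (distrib a b g t).toReal with hGt
  have hGt0 : 0 ≤ Gt := ENNReal.toReal_nonneg
  have hLHS : volume.restrict (Set.Ioc a b)
      {α | rearrangeOn a b f α ≤ s ∧ t < rearrangeOn a b g α}
      = distrib a b f s - distrib a b g t := by
    rw [Measure.restrict_apply' measurableSet_Ioc]
    have hDf : Fs ≤ b - a := by
      have h := @distrib_le a b s f
      calc Fs ≤ (ENNReal.ofReal (b-a)).toReal :=
        ENNReal.toReal_mono ENNReal.ofReal_ne_top h
      _ = b - a := ENNReal.toReal_ofReal (by linarith)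
    have hset : {α | rearrangeOn a b f α ≤ s ∧ t < rearrangeOn a b g α} ∩ Set.Ioc a b
        = Set.Ioc (a + Gt) (a + Fs) := by
      have h1 := rearrange_sublevel_eq hab hf hfb s
      have h2 := rearrange_sublevel_eq hab hg hgb t
      ext α
      constructor
      · rintro ⟨⟨hfa, hga⟩, hio⟩
        have hα1 : α ∈ Set.Ioc a (a + Fs) := by rw [← h1]; exact ⟨hfa, hio⟩
        have hlow : a + Gt < α := by
          by_contra hcon
          push_neg at hcon
          have hmem2 : α ∈ Set.Ioc a (a + Gt) := ⟨hio.1, hcon⟩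
          rw [← h2] at hmem2
          exact absurd hmem2.1 (not_le.mpr hga)
        exact ⟨hlow, hα1.2⟩
      · rintro ⟨hl, hr⟩
        have haα : a < α := lt_of_le_of_lt (by linarith) hl
        have hmem : α ∈ Set.Ioc a b := ⟨haα, by linarith⟩
        have hα1 : α ∈ Set.Ioc a (a + Fs) := ⟨haα, hr⟩
        rw [← h1] at hα1
        have hα2 : α ∉ Set.Ioc a (a + Gt) := fun hc => absurd hc.2 (not_le.mpr hl)
        rw [← h2] at hα2
        have hgt : t < rearrangeOn a b g α := by
          by_contra hcon
          push_neg at hcon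
          exact hα2 ⟨hcon, hmem⟩
        exact ⟨⟨hα1.1, hgt⟩, hmem⟩
    rw [hset, Real.volume_Ioc]
    have : a + Fs - (a + Gt) = Fs - Gt := by ring
    rw [this, ENNReal.ofReal_sub _ hGt0, hFs, hGt,
      ENNReal.ofReal_toReal distrib_ne_top, ENNReal.ofReal_toReal distrib_ne_top]
  rw [hLHS]
  rw [tsub_le_iff_right, distrib_eq_restrict_Ioc a b s f, distrib_eq_restrict_Ioc a b t g]
  calc volume.restrict (Set.Ioc a b) {u | f u ≤ s}
      ≤ volume.restrict (Set.Ioc a b) ({u | f u ≤ s ∧ t < g u} ∪ {u | g u ≤ t}) := by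
        apply measure_mono
        intro u hu
        rcases le_or_gt (g u) t with h | h
        · exact Or.inr h
        · exact Or.inl ⟨hu, h⟩
  _ ≤ _ := measure_union_le _ _

end Quantile

noncomputable def nu (q : ℝ) : Measure ℝ :=
  if q = 1 then Measure.dirac 0
  else (volume.restrict (Set.Ioi (0:ℝ))).withDensity
    (fun r => ENNReal.ofReal (q*(q-1)*r^(q-2)))

instance nu_sfinite (q : ℝ) : SFinite (nu q) := by
  rw [nu]; split <;> infer_instance

lemma nu_ae_nonneg (q : ℝ) : ∀ᵐ r ∂(nu q), 0 ≤ r := by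
  rw [ae_iff, nu]
  have hset : {r : ℝ | ¬ 0 ≤ r} = Set.Iio 0 := by ext r; simp [not_le]
  split
  · rw [hset, Measure.dirac_apply' _ measurableSet_Iio]
    simp
  · rw [hset, withDensity_apply _ measurableSet_Iio, Measure.restrict_restrict measurableSet_Iio]
    have : Set.Iio (0:ℝ) ∩ Set.Ioi 0 = ∅ := by
      ext r; simp only [mem_inter_iff, mem_Iio, mem_Ioi, mem_empty_iff_false, iff_false, not_and]
      intro h; linarith
    rw [this]
    simp

lemma lintegral_nu {q : ℝ} (hq : 1 ≤ q) {d : ℝ} (hd : 0 ≤ d) :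
    ∫⁻ r, ENNReal.ofReal (d - r) ∂(nu q) = ENNReal.ofReal (d ^ q) := by
  rcases eq_or_lt_of_le hq with h1 | h1
  · rw [nu, if_pos h1.symm, lintegral_dirac]
    rw [← h1]
    simp [Real.rpow_one]
  · have hq0 : q ≠ 1 := by linarith
    rw [nu, if_neg hq0]
    have hdens : Measurable (fun r : ℝ => ENNReal.ofReal (q*(q-1)*r^(q-2))) := by
      fun_prop
    have hgm : Measurable (fun r : ℝ => ENNReal.ofReal (d - r)) :=
      (measurable_const.sub measurable_id).ennreal_ofReal
    rw [lintegral_withDensity_eq_lintegral_mul _ hdens hgm]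
    simp only [Pi.mul_apply]
    rcases eq_or_lt_of_le hd with hd0 | hd0
    · have : ∀ᵐ r ∂(volume.restrict (Set.Ioi (0:ℝ))),
          (fun r => ENNReal.ofReal (q*(q-1)*r^(q-2)) * ENNReal.ofReal (d - r)) r = 0 := by
        rw [ae_restrict_iff' measurableSet_Ioi]
        refine ae_of_all _ (fun r hr => ?_)
        have hneg : d - r < 0 := by simp only [mem_Ioi] at hr; linarith
        simp only [ENNReal.ofReal_eq_zero.mpr hneg.le, mul_zero]
      rw [lintegral_congr_ae this, lintegral_zero, ← hd0,
        Real.zero_rpow (by linarith : q ≠ 0), ENNReal.ofReal_zero]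
    · -- d > 0
      set G : ℝ → ℝ := fun r => q*(q-1)*(d * r^(q-2) - r^(q-1)) with hG
      have hstep1 : ∫⁻ r in Set.Ioi (0:ℝ),
          ENNReal.ofReal (q*(q-1)*r^(q-2)) * ENNReal.ofReal (d - r)
          = ∫⁻ r in Set.Ioo (0:ℝ) d,
          ENNReal.ofReal (q*(q-1)*r^(q-2)) * ENNReal.ofReal (d - r) := by
        have hind : ∀ r ∈ Set.Ioi (0:ℝ),
            ENNReal.ofReal (q*(q-1)*r^(q-2)) * ENNReal.ofReal (d - r)
            = (Set.Ioo (0:ℝ) d).indicator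
              (fun r => ENNReal.ofReal (q*(q-1)*r^(q-2)) * ENNReal.ofReal (d - r)) r := by
          intro r hr
          by_cases hrd : r < d
          · have hmem : r ∈ Set.Ioo 0 d := ⟨hr, hrd⟩
            rw [Set.indicator_of_mem hmem]
          · rw [Set.indicator_of_notMem (fun hc => hrd hc.2),
              ENNReal.ofReal_eq_zero.mpr (by linarith : d - r ≤ 0), mul_zero]
        rw [setLIntegral_congr_fun measurableSet_Ioi hind,
          lintegral_indicator measurableSet_Ioo, Measure.restrict_restrict measurableSet_Ioo,
          Set.inter_eq_self_of_subset_left Set.Ioo_subset_Ioi_self]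
      have hstep2 : ∫⁻ r in Set.Ioo (0:ℝ) d,
          ENNReal.ofReal (q*(q-1)*r^(q-2)) * ENNReal.ofReal (d - r)
          = ∫⁻ r in Set.Ioo (0:ℝ) d, ENNReal.ofReal (G r) := by
        refine setLIntegral_congr_fun measurableSet_Ioo (fun r hr => ?_)
        obtain ⟨hr0, hrd⟩ := hr
        have hnn : 0 ≤ q*(q-1)*r^(q-2) := by
          have h2 := Real.rpow_nonneg hr0.le (q-2)
          have hc : (0:ℝ) ≤ q*(q-1) := by nlinarith
          exact mul_nonneg hc h2
        rw [← ENNReal.ofReal_mul hnn]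
        congr 1
        have hpow : r ^ (q-1) = r^(q-2) * r := by
          have hq' : q - 1 = (q-2) + 1 := by ring
          rw [hq', Real.rpow_add_one hr0.ne']
        rw [hG]
        simp only
        rw [hpow]
        ring
      have i1 : IntegrableOn (fun r : ℝ => r ^ (q-2)) (Set.Ioo 0 d) :=
        ((intervalIntegral.intervalIntegrable_rpow' (by linarith)).1).mono_set Set.Ioo_subset_Ioc_self
      have i2 : IntegrableOn (fun r : ℝ => r ^ (q-1)) (Set.Ioo 0 d) :=
        ((intervalIntegral.intervalIntegrable_rpow' (by linarith)).1).mono_set Set.Ioo_subset_Ioc_self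
      have iG : Integrable G (volume.restrict (Set.Ioo 0 d)) :=
        ((i1.const_mul d).sub i2).const_mul (q*(q-1))
      have hGnn : 0 ≤ᶠ[ae (volume.restrict (Set.Ioo 0 d))] G := by
        rw [Filter.EventuallyLE, ae_restrict_iff' measurableSet_Ioo]
        refine ae_of_all _ (fun r hr => ?_)
        obtain ⟨hr0, hrd⟩ := hr
        have hpow : r ^ (q-1) = r^(q-2) * r := by
          have hq' : q - 1 = (q-2) + 1 := by ring
          rw [hq', Real.rpow_add_one hr0.ne']
        have h2 := Real.rpow_nonneg hr0.le (q-2)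
        have h3 : 0 ≤ r^(q-2) * (d - r) := mul_nonneg h2 (by linarith)
        have hc : (0:ℝ) ≤ q*(q-1) := by nlinarith
        simp only [Pi.zero_apply, hG, hpow]
        nlinarith [mul_nonneg hc h3]
      have hstep3 : ∫⁻ r in Set.Ioo (0:ℝ) d, ENNReal.ofReal (G r)
          = ENNReal.ofReal (∫ r in Set.Ioo (0:ℝ) d, G r) :=
        (ofReal_integral_eq_lintegral_ofReal iG hGnn).symm
      have hstep4 : ∫ r in Set.Ioo (0:ℝ) d, G r = d ^ q := by
        rw [← integral_Ioc_eq_integral_Ioo, ← intervalIntegral.integral_of_le hd0.le]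
        have j1 : IntervalIntegrable (fun r : ℝ => d * r ^ (q-2)) volume 0 d :=
          (intervalIntegral.intervalIntegrable_rpow' (by linarith)).const_mul d
        have j2 : IntervalIntegrable (fun r : ℝ => r ^ (q-1)) volume 0 d :=
          intervalIntegral.intervalIntegrable_rpow' (by linarith)
        rw [hG]
        simp only
        rw [intervalIntegral.integral_const_mul, intervalIntegral.integral_sub j1 j2,
          intervalIntegral.integral_const_mul, integral_rpow (Or.inl (by linarith)),
          integral_rpow (Or.inl (by linarith))]
        have e1 : q - 2 + 1 = q - 1 := by ring
        have e2 : q - 1 + 1 = q := by ring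
        rw [e1, e2, Real.zero_rpow (by linarith : q - 1 ≠ 0),
          Real.zero_rpow (by linarith : q ≠ 0)]
        have hdq : d ^ (q-1) * d = d ^ q := by
          rw [← Real.rpow_add_one hd0.ne' (q-1), e2]
        have hq0' : q ≠ 0 := by linarith
        have hq1' : q - 1 ≠ 0 := by linarith
        set A := d ^ (q-1) with hA
        set B := d ^ q with hB
        field_simp
        linear_combination q * hdq
      rw [hstep1, hstep2, hstep3, hstep4]


lemma core {μ : Measure ℝ} [SFinite μ] {X Y : ℝ → ℝ} (hX : Measurable X) (hY : Measurable Y)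
    {q : ℝ} (hq : 1 ≤ q) :
    ∫⁻ α, ENNReal.ofReal (|X α - Y α| ^ q) ∂μ
      = ∫⁻ r, ∫⁻ s, μ {α | (X α ≤ s ∧ s + r < Y α) ∨ (Y α ≤ s ∧ s + r < X α)} ∂volume
          ∂(nu q) := by
  have step1 : ∫⁻ α, ENNReal.ofReal (|X α - Y α| ^ q) ∂μ
      = ∫⁻ α, ∫⁻ r, ENNReal.ofReal (|X α - Y α| - r) ∂(nu q) ∂μ :=
    lintegral_congr (fun α => (lintegral_nu hq (abs_nonneg _)).symm)
  have hswap1 : ∫⁻ α, ∫⁻ r, ENNReal.ofReal (|X α - Y α| - r) ∂(nu q) ∂μ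
      = ∫⁻ r, ∫⁻ α, ENNReal.ofReal (|X α - Y α| - r) ∂μ ∂(nu q) := by
    apply lintegral_lintegral_swap
    apply Measurable.aemeasurable
    fun_prop
  rw [step1, hswap1]
  refine lintegral_congr (fun r => ?_)
  -- fixed r : swap α and s
  set E : Set (ℝ × ℝ) :=
    {p : ℝ × ℝ | (X p.1 ≤ p.2 ∧ p.2 + r < Y p.1) ∨ (Y p.1 ≤ p.2 ∧ p.2 + r < X p.1)} with hE
  have hEmeas : MeasurableSet E := by
    apply MeasurableSet.union
    · exact ((measurableSet_le (hX.comp measurable_fst) measurable_snd).inter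
        (measurableSet_lt (measurable_snd.add_const r) (hY.comp measurable_fst)))
    · exact ((measurableSet_le (hY.comp measurable_fst) measurable_snd).inter
        (measurableSet_lt (measurable_snd.add_const r) (hX.comp measurable_fst)))
  have hsec : ∀ α, MeasurableSet {s : ℝ | (α, s) ∈ E} := fun α =>
    measurable_prodMk_left hEmeas
  have hsec2 : ∀ s, MeasurableSet {α : ℝ | (α, s) ∈ E} := fun s =>
    measurable_prodMk_right hEmeas
  have key1 : ∀ α, ENNReal.ofReal (|X α - Y α| - r) = volume {s : ℝ | (α, s) ∈ E} := by
    intro α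
    have hset : {s : ℝ | (α, s) ∈ E}
        = Set.Ico (min (X α) (Y α)) (max (X α) (Y α) - r) := by
      ext s
      constructor
      · rintro (⟨h1, h2⟩ | ⟨h1, h2⟩)
        · have hmin : min (X α) (Y α) ≤ s := le_trans (min_le_left _ _) h1
          have hmax : s + r < max (X α) (Y α) := lt_of_lt_of_le h2 (le_max_right _ _)
          exact ⟨hmin, by linarith⟩
        · have hmin : min (X α) (Y α) ≤ s := le_trans (min_le_right _ _) h1
          have hmax : s + r < max (X α) (Y α) := lt_of_lt_of_le h2 (le_max_left _ _)
          exact ⟨hmin, by linarith⟩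
      · rintro ⟨h1, h2⟩
        rcases le_total (X α) (Y α) with hxy | hxy
        · rw [min_eq_left hxy] at h1
          rw [max_eq_right hxy] at h2
          exact Or.inl ⟨h1, by linarith⟩
        · rw [min_eq_right hxy] at h1
          rw [max_eq_left hxy] at h2
          exact Or.inr ⟨h1, by linarith⟩
    rw [hset, Real.volume_Ico]
    congr 1
    have h := max_sub_min_eq_abs (X α) (Y α)
    have h2 := abs_sub_comm (X α) (Y α)
    linarith
  have step2 : ∫⁻ α, ENNReal.ofReal (|X α - Y α| - r) ∂μ
      = ∫⁻ α, ∫⁻ s, E.indicator (fun _ => (1:ℝ≥0∞)) (α, s) ∂volume ∂μ := by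
    refine lintegral_congr (fun α => ?_)
    rw [key1 α]
    rw [← lintegral_indicator_one (hsec α)]
    refine lintegral_congr (fun s => ?_)
    by_cases h : (α, s) ∈ E
    · have h' : s ∈ {s : ℝ | (α, s) ∈ E} := h
      rw [Set.indicator_of_mem h', Set.indicator_of_mem h]
      rfl
    · have h' : s ∉ {s : ℝ | (α, s) ∈ E} := h
      rw [Set.indicator_of_notMem h', Set.indicator_of_notMem h]
  have hswap2 : ∫⁻ α, ∫⁻ s, E.indicator (fun _ => (1:ℝ≥0∞)) (α, s) ∂volume ∂μ
      = ∫⁻ s, ∫⁻ α, E.indicator (fun _ => (1:ℝ≥0∞)) (α, s) ∂μ ∂volume := by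
    apply lintegral_lintegral_swap
    exact ((measurable_one.indicator hEmeas).comp measurable_id).aemeasurable
  rw [step2, hswap2]
  refine lintegral_congr (fun s => ?_)
  have : ∫⁻ α, E.indicator (fun _ => (1:ℝ≥0∞)) (α, s) ∂μ = μ {α : ℝ | (α, s) ∈ E} := by
    rw [← lintegral_indicator_one (hsec2 s)]
    refine lintegral_congr (fun α => ?_)
    by_cases h : (α, s) ∈ E
    · have h' : α ∈ {α : ℝ | (α, s) ∈ E} := h
      rw [Set.indicator_of_mem h', Set.indicator_of_mem h]
      rfl
    · have h' : α ∉ {α : ℝ | (α, s) ∈ E} := h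
      rw [Set.indicator_of_notMem h', Set.indicator_of_notMem h]
  rw [this]
  rfl


/-- clamped version of the rearrangement, globally monotone. -/
noncomputable def qcl (a b M : ℝ) (f : ℝ → ℝ) : ℝ → ℝ := fun α =>
  if α ≤ a then -M else rearrangeOn a b f (min α b)

variable {a b M : ℝ} {f g : ℝ → ℝ}

lemma qcl_eq {α : ℝ} (hα : α ∈ Set.Ioc a b) : qcl a b M f α = rearrangeOn a b f α := by
  rw [qcl, if_neg (not_le.mpr hα.1), min_eq_left hα.2]

lemma qcl_monotone (hab : a < b) (hfb : ∀ u ∈ Set.Icc a b, |f u| ≤ M) :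
    Monotone (qcl a b M f) := by
  intro α β hle
  show (if α ≤ a then -M else rearrangeOn a b f (min α b))
    ≤ (if β ≤ a then -M else rearrangeOn a b f (min β b))
  by_cases hα : α ≤ a
  · rw [if_pos hα]
    by_cases hβ : β ≤ a
    · rw [if_pos hβ]
    · rw [if_neg hβ]
      push_neg at hβ
      exact neg_le_rearrange hfb ⟨lt_min hβ hab, min_le_right _ _⟩
  · have hβ : ¬ β ≤ a := fun h => hα (hle.trans h)
    rw [if_neg hα, if_neg hβ]
    push_neg at hα hβ
    exact rearrange_monotoneOn hfb ⟨lt_min hα hab, min_le_right _ _⟩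
      ⟨lt_min hβ hab, min_le_right _ _⟩ (min_le_min hle le_rfl)

lemma qcl_measurable (hab : a < b) (hfb : ∀ u ∈ Set.Icc a b, |f u| ≤ M) :
    Measurable (qcl a b M f) :=
  (qcl_monotone hab hfb).measurable

lemma restrict_set_congr_qcl (hab : a < b) {P Q : ℝ → ℝ → Prop}
    (hPQ : ∀ α ∈ Set.Ioc a b,
      (P (qcl a b M f α) (qcl a b M g α) ↔ Q (rearrangeOn a b f α) (rearrangeOn a b g α))) :
    volume.restrict (Set.Ioc a b) {α | P (qcl a b M f α) (qcl a b M g α)}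
      = volume.restrict (Set.Ioc a b) {α | Q (rearrangeOn a b f α) (rearrangeOn a b g α)} := by
  rw [Measure.restrict_apply' measurableSet_Ioc, Measure.restrict_apply' measurableSet_Ioc]
  congr 1
  ext α
  simp only [mem_inter_iff, mem_setOf_eq, and_congr_left_iff]
  intro hα
  exact hPQ α hα

/-- comparison of the double integrands -/
lemma compare (hab : a < b) (hf : Measurable f) (hfb : ∀ u ∈ Set.Icc a b, |f u| ≤ M)
    (hg : Measurable g) (hgb : ∀ u ∈ Set.Icc a b, |g u| ≤ M) {r : ℝ} (hr : 0 ≤ r) (s : ℝ) :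
    volume.restrict (Set.Ioc a b)
      {α | (qcl a b M f α ≤ s ∧ s + r < qcl a b M g α)
        ∨ (qcl a b M g α ≤ s ∧ s + r < qcl a b M f α)}
    ≤ volume.restrict (Set.Ioc a b)
      {α | (f α ≤ s ∧ s + r < g α) ∨ (g α ≤ s ∧ s + r < f α)} := by
  set μ := volume.restrict (Set.Ioc a b) with hμ
  have hsub : {α | (qcl a b M f α ≤ s ∧ s + r < qcl a b M g α)
        ∨ (qcl a b M g α ≤ s ∧ s + r < qcl a b M f α)}
      ⊆ {α | qcl a b M f α ≤ s ∧ s + r < qcl a b M g α}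
        ∪ {α | qcl a b M g α ≤ s ∧ s + r < qcl a b M f α} := by
    intro α hα; exact hα
  have h1 : μ {α | qcl a b M f α ≤ s ∧ s + r < qcl a b M g α}
      ≤ μ {u | f u ≤ s ∧ s + r < g u} := by
    have := restrict_set_congr_qcl (M := M) (f := f) (g := g) hab
      (P := fun x y => x ≤ s ∧ s + r < y) (Q := fun x y => x ≤ s ∧ s + r < y)
      (fun α hα => by rw [qcl_eq hα, qcl_eq hα])
    rw [hμ, this]
    exact master hab hf hfb hg hgb s (s + r)
  have h2 : μ {α | qcl a b M g α ≤ s ∧ s + r < qcl a b M f α}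
      ≤ μ {u | g u ≤ s ∧ s + r < f u} := by
    have := restrict_set_congr_qcl (M := M) (f := g) (g := f) hab
      (P := fun x y => x ≤ s ∧ s + r < y) (Q := fun x y => x ≤ s ∧ s + r < y)
      (fun α hα => by rw [qcl_eq hα, qcl_eq hα])
    rw [hμ, this]
    exact master hab hg hgb hf hfb s (s + r)
  have hdisj : Disjoint {u | f u ≤ s ∧ s + r < g u} {u | g u ≤ s ∧ s + r < f u} := by
    rw [Set.disjoint_left]
    rintro u ⟨hu1, hu2⟩ ⟨hv1, hv2⟩
    linarith
  have hBmeas : MeasurableSet {u | g u ≤ s ∧ s + r < f u} :=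
    (measurableSet_le hg measurable_const).inter
      (measurableSet_lt measurable_const hf)
  calc μ _ ≤ μ ({α | qcl a b M f α ≤ s ∧ s + r < qcl a b M g α}
        ∪ {α | qcl a b M g α ≤ s ∧ s + r < qcl a b M f α}) := measure_mono hsub
  _ ≤ μ {α | qcl a b M f α ≤ s ∧ s + r < qcl a b M g α}
        + μ {α | qcl a b M g α ≤ s ∧ s + r < qcl a b M f α} := measure_union_le _ _
  _ ≤ μ {u | f u ≤ s ∧ s + r < g u} + μ {u | g u ≤ s ∧ s + r < f u} := add_le_add h1 h2
  _ = μ ({u | f u ≤ s ∧ s + r < g u} ∪ {u | g u ≤ s ∧ s + r < f u}) :=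
      (measure_union hdisj hBmeas).symm
  _ = μ {α | (f α ≤ s ∧ s + r < g α) ∨ (g α ≤ s ∧ s + r < f α)} := rfl

/-- a.e. equality of the rearrangement with a monotone function -/
lemma rearrange_ae_eq_self (hab : a < b) (hg : Measurable g)
    (hgb : ∀ u ∈ Set.Icc a b, |g u| ≤ M) (hmono : MonotoneOn g (Set.Icc a b)) :
    (fun α => rearrangeOn a b g α) =ᶠ[ae (volume.restrict (Set.Ioc a b))] g := by
  set μ := volume.restrict (Set.Ioc a b) with hμ
  have hle : ∀ α ∈ Set.Ioc a b, rearrangeOn a b g α ≤ g α := by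
    intro α hα
    rw [rearrange_eq']
    refine csInf_le (qSet_bddBelow hgb hα.1) ?_
    have hsub : Set.Icc a α ⊆ {u ∈ Set.Icc a b | g u ≤ g α} := by
      intro u hu
      have huIcc : u ∈ Set.Icc a b := ⟨hu.1, hu.2.trans hα.2⟩
      exact ⟨huIcc, hmono huIcc ⟨hα.1.le, hα.2⟩ hu.2⟩
    show ENNReal.ofReal (α - a) ≤ distrib a b g (g α)
    calc ENNReal.ofReal (α - a) = volume (Set.Icc a α) := (Real.volume_Icc).symm
    _ ≤ distrib a b g (g α) := measure_mono hsub
  have hmap : μ.map (qcl a b M g) = μ.map g := by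
    have hfin : IsFiniteMeasure (μ.map (qcl a b M g)) := by
      constructor
      rw [Measure.map_apply (qcl_measurable hab hgb) MeasurableSet.univ]
      exact lt_of_le_of_lt (measure_mono (Set.subset_univ _))
        (by rw [hμ, Measure.restrict_apply' measurableSet_Ioc, Set.univ_inter, Real.volume_Ioc]
            exact ENNReal.ofReal_lt_top)
    refine Measure.ext_of_Iic _ _ (fun x => ?_)
    rw [Measure.map_apply (qcl_measurable hab hgb) measurableSet_Iic,
      Measure.map_apply hg measurableSet_Iic]
    have e1 : μ (qcl a b M g ⁻¹' Set.Iic x) = μ {α | rearrangeOn a b g α ≤ x} := by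
      rw [hμ, Measure.restrict_apply' measurableSet_Ioc,
        Measure.restrict_apply' measurableSet_Ioc]
      congr 1
      ext α
      simp only [mem_inter_iff, mem_preimage, mem_Iic, mem_setOf_eq, and_congr_left_iff]
      intro hα
      rw [qcl_eq hα]
    rw [e1, volume_rearrange_sublevel hab hg hgb x, distrib_eq_restrict_Ioc]
    rfl
  have hint : ∫⁻ α, ENNReal.ofReal (qcl a b M g α + M) ∂μ
      = ∫⁻ α, ENNReal.ofReal (g α + M) ∂μ := by
    have l1 := lintegral_map (f := fun x : ℝ => ENNReal.ofReal (x + M))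
      (g := qcl a b M g) (μ := μ) (by fun_prop) (qcl_measurable hab hgb)
    have l2 := lintegral_map (f := fun x : ℝ => ENNReal.ofReal (x + M))
      (g := g) (μ := μ) (by fun_prop) hg
    rw [← l1, ← l2, hmap]
  have haemem : ∀ᵐ α ∂μ, α ∈ Set.Ioc a b := ae_restrict_mem measurableSet_Ioc
  have hsplit : ∀ᵐ α ∂μ, ENNReal.ofReal (g α + M)
      = ENNReal.ofReal (g α - qcl a b M g α) + ENNReal.ofReal (qcl a b M g α + M) := by
    filter_upwards [haemem] with α hα
    rw [qcl_eq hα, ← ENNReal.ofReal_add (by linarith [hle α hα]) (by linarith [neg_le_rearrange hgb hα])]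
    congr 1
    ring
  have hfin2 : ∫⁻ α, ENNReal.ofReal (qcl a b M g α + M) ∂μ ≠ ∞ := by
    have hbd : ∀ᵐ α ∂μ, ENNReal.ofReal (qcl a b M g α + M) ≤ ENNReal.ofReal (M + M) := by
      filter_upwards [haemem] with α hα
      refine ENNReal.ofReal_le_ofReal ?_
      rw [qcl_eq hα]
      linarith [rearrange_le_M hgb hα]
    refine ne_of_lt (lt_of_le_of_lt (lintegral_mono_ae hbd) ?_)
    rw [lintegral_const]
    exact ENNReal.mul_lt_top ENNReal.ofReal_lt_top
      (by rw [hμ, Measure.restrict_apply' measurableSet_Ioc, Set.univ_inter, Real.volume_Ioc]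
          exact ENNReal.ofReal_lt_top)
  have hzero : ∫⁻ α, ENNReal.ofReal (g α - qcl a b M g α) ∂μ = 0 := by
    have : ∫⁻ α, ENNReal.ofReal (g α + M) ∂μ
        = ∫⁻ α, ENNReal.ofReal (g α - qcl a b M g α) ∂μ
          + ∫⁻ α, ENNReal.ofReal (qcl a b M g α + M) ∂μ := by
      rw [← lintegral_add_right _ (((qcl_measurable hab hgb).add_const M).ennreal_ofReal :
        Measurable (fun α => ENNReal.ofReal (qcl a b M g α + M)))]
      exact lintegral_congr_ae hsplit
    rw [← hint] at this
    rw [add_comm (∫⁻ α, ENNReal.ofReal (g α - qcl a b M g α) ∂μ)] at this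
    nth_rewrite 1 [show ∫⁻ α, ENNReal.ofReal (qcl a b M g α + M) ∂μ
      = ∫⁻ α, ENNReal.ofReal (qcl a b M g α + M) ∂μ + 0 from (add_zero _).symm] at this
    exact ((ENNReal.add_right_inj hfin2).mp this).symm
  have hae := (lintegral_eq_zero_iff ((hg.sub (qcl_measurable hab hgb)).ennreal_ofReal :
    Measurable (fun α => ENNReal.ofReal (g α - qcl a b M g α)))).mp hzero
  filter_upwards [hae, haemem] with α h0 hα
  have h0' : ENNReal.ofReal (g α - qcl a b M g α) = 0 := h0
  rw [ENNReal.ofReal_eq_zero] at h0'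
  rw [qcl_eq hα] at h0'
  have := hle α hα
  show rearrangeOn a b g α = g α
  linarith


lemma distrib_shift {C : ℝ}
    (hae : ∀ᵐ u ∂(volume.restrict (Set.Ioc a b)), |f u - g u| ≤ C) (x : ℝ) :
    distrib a b g x ≤ distrib a b f (x + C) := by
  rw [distrib_eq_restrict_Ioc, distrib_eq_restrict_Ioc]
  refine measure_mono_ae ?_
  filter_upwards [hae] with u hu hus
  have h2 := (abs_le.mp hu).2
  show f u ≤ x + C
  have : g u ≤ x := hus
  linarith

lemma rearrange_sub_le (hfb : ∀ u ∈ Set.Icc a b, |f u| ≤ M)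
    (hgb : ∀ u ∈ Set.Icc a b, |g u| ≤ M) {C : ℝ}
    (hae : ∀ᵐ u ∂(volume.restrict (Set.Ioc a b)), |f u - g u| ≤ C)
    {α : ℝ} (hα : α ∈ Set.Ioc a b) :
    rearrangeOn a b f α - rearrangeOn a b g α ≤ C := by
  have h : ∀ y ∈ qSet a b g α, rearrangeOn a b f α - C ≤ y := by
    intro y hy
    have h1 : ENNReal.ofReal (α - a) ≤ distrib a b g y := hy
    have h2 : ENNReal.ofReal (α - a) ≤ distrib a b f (y + C) :=
      le_trans h1 (distrib_shift hae y)
    have h3 : y + C ∈ qSet a b f α := h2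
    have h4 := csInf_le (qSet_bddBelow hfb hα.1) h3
    rw [← rearrange_eq'] at h4
    linarith
  have h5 := le_csInf (qSet_nonempty hgb hα.2) h
  rw [← rearrange_eq'] at h5
  linarith

lemma rearrange_abs_le (hfb : ∀ u ∈ Set.Icc a b, |f u| ≤ M)
    (hgb : ∀ u ∈ Set.Icc a b, |g u| ≤ M) {C : ℝ}
    (hae : ∀ᵐ u ∂(volume.restrict (Set.Ioc a b)), |f u - g u| ≤ C)
    {α : ℝ} (hα : α ∈ Set.Ioc a b) :
    |rearrangeOn a b f α - rearrangeOn a b g α| ≤ C := by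
  rw [abs_sub_le_iff]
  constructor
  · exact rearrange_sub_le hfb hgb hae hα
  · refine rearrange_sub_le hgb hfb ?_ hα
    filter_upwards [hae] with u hu
    rwa [abs_sub_comm]


end Stmt16Aux

open Stmt16Aux in
theorem stmt16 (a b : ℝ) (hab : a < b) (f g : ℝ → ℝ)
    (hf : Measurable f) (hg : Measurable g)
    (M : ℝ) (hfb : ∀ u ∈ Set.Icc a b, |f u| ≤ M) (hgb : ∀ u ∈ Set.Icc a b, |g u| ≤ M)
    (p : ℝ≥0∞) (hp : 1 ≤ p) :
    (eLpNorm (fun u => rearrangeOn a b f u - rearrangeOn a b g u) p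
        (volume.restrict (Set.Icc a b))
      ≤ eLpNorm (fun u => f u - g u) p (volume.restrict (Set.Icc a b))) ∧
    (MonotoneOn g (Set.Icc a b) →
      eLpNorm (fun u => rearrangeOn a b f u - g u) p (volume.restrict (Set.Icc a b))
        ≤ eLpNorm (fun u => f u - g u) p (volume.restrict (Set.Icc a b))) := by
  have hres : volume.restrict (Set.Icc a b) = volume.restrict (Set.Ioc a b) :=
    (Measure.restrict_congr_set Ioc_ae_eq_Icc).symm
  rw [hres]
  set μ := volume.restrict (Set.Ioc a b) with hμ
  have part1 : eLpNorm (fun u => rearrangeOn a b f u - rearrangeOn a b g u) p μ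
      ≤ eLpNorm (fun u => f u - g u) p μ := by
    rcases eq_or_ne p ∞ with hptop | hptop
    · subst hptop
      rw [eLpNorm_exponent_top, eLpNorm_exponent_top]
      set c := eLpNormEssSup (fun u => f u - g u) μ with hc'
      rcases eq_or_ne c ∞ with hc | hc
      · rw [hc]; exact le_top
      · have h1 : ∀ᵐ u ∂μ, |f u - g u| ≤ c.toReal := by
          have h2 := ae_le_eLpNormEssSup (f := fun u => f u - g u) (μ := μ)
          filter_upwards [h2] with u hu
          have h3 : ((‖f u - g u‖₊ : ℝ≥0∞)).toReal ≤ c.toReal := ENNReal.toReal_mono hc hu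
          rwa [ENNReal.coe_toReal, coe_nnnorm, Real.norm_eq_abs] at h3
        refine le_trans (eLpNormEssSup_le_of_ae_bound (C := c.toReal) ?_) ?_
        · filter_upwards [ae_restrict_mem measurableSet_Ioc] with α hα
          rw [Real.norm_eq_abs]
          exact rearrange_abs_le hfb hgb h1 hα
        · rw [ENNReal.ofReal_toReal hc]
    · have hp0 : p ≠ 0 := fun h => by simp [h] at hp
      have hq1 : 1 ≤ p.toReal := by
        rw [← ENNReal.toReal_one]
        exact ENNReal.toReal_mono hptop hp
      have hq0 : 0 ≤ p.toReal := by linarith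
      set q := p.toReal with hqdef
      have hQf : Measurable (qcl a b M f) := qcl_measurable hab hfb
      have hQg : Measurable (qcl a b M g) := qcl_measurable hab hgb
      have hnorm : ∀ (X Y : ℝ → ℝ),
          eLpNorm (fun u => X u - Y u) p μ
            = (∫⁻ α, ENNReal.ofReal (|X α - Y α| ^ q) ∂μ) ^ (1/q) := by
        intro X Y
        rw [eLpNorm_eq_lintegral_rpow_enorm_toReal hp0 hptop]
        congr 1
        refine lintegral_congr (fun α => ?_)
        have he : ‖X α - Y α‖ₑ = ENNReal.ofReal |X α - Y α| := by
          rw [← Real.norm_eq_abs, ofReal_norm]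
        rw [← hqdef, he, ENNReal.ofReal_rpow_of_nonneg (abs_nonneg _) hq0]
      have hcongr : eLpNorm (fun u => rearrangeOn a b f u - rearrangeOn a b g u) p μ
          = eLpNorm (fun u => qcl a b M f u - qcl a b M g u) p μ := by
        refine eLpNorm_congr_ae ?_
        filter_upwards [ae_restrict_mem measurableSet_Ioc] with α hα
        rw [qcl_eq hα, qcl_eq hα]
      rw [hcongr, hnorm (qcl a b M f) (qcl a b M g), hnorm f g]
      refine ENNReal.rpow_le_rpow ?_ (by positivity)
      rw [core hQf hQg hq1, core hf hg hq1]
      refine lintegral_mono_ae ?_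
      filter_upwards [nu_ae_nonneg q] with r hr
      exact lintegral_mono (fun s => compare hab hf hfb hg hgb hr s)
  refine ⟨part1, fun hmono => ?_⟩
  have hgq := rearrange_ae_eq_self hab hg hgb hmono
  have hcongr2 : eLpNorm (fun u => rearrangeOn a b f u - g u) p μ
      = eLpNorm (fun u => rearrangeOn a b f u - rearrangeOn a b g u) p μ := by
    refine eLpNorm_congr_ae ?_
    filter_upwards [hgq] with α hα
    rw [show rearrangeOn a b g α = g α from hα]
  rw [hcongr2]
  exact part1
end
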